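/- arXiv:math/0508178 — 3 statements merged into one kernel-verified Lean document; each statement's English description precedes it below -/
import Mathlib

section
/- J̃ = lim_{τ→∞} (I + τL)^{-1}: the normalized matrix of maximum in-forests is the limit of the parametric forest matrices J(τ) as τ → ∞. -/
open Matrix Finset Polynomial

/-- `A` is (the arc set of) an in-forest of the weighted digraph with arc-weight
matrix `W`: all arcs are loopless arcs of positive weight, every vertex has
outdegree at most one, and there are no directed cycles. -/
def IsInForest {n : ℕ} (W : Matrix (Fin n) (Fin n) ℝ)
    (A : Finset (Fin n × Fin n)) : Prop :=
  (∀ e ∈ A, e.1 ≠ e.2 ∧ 0 < W e.1 e.2) ∧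
  (∀ i : Fin n, (A.filter (fun e => e.1 = i)).card ≤ 1) ∧
  (∀ i : Fin n, ¬ Relation.TransGen (fun a b => (a, b) ∈ A) i i)

/-- The weight of a forest: the product of its arc weights. -/
def forestWeight {n : ℕ} (W : Matrix (Fin n) (Fin n) ℝ)
    (A : Finset (Fin n × Fin n)) : ℝ :=
  ∏ e ∈ A, W e.1 e.2

/-- `i` belongs to the tree of the forest `A` converging to (rooted at) `j`. -/
def InTreeRootedAt {n : ℕ} (A : Finset (Fin n × Fin n)) (i j : Fin n) : Prop :=
  Relation.ReflTransGen (fun a b => (a, b) ∈ A) i j ∧ ∀ e ∈ A, e.1 ≠ j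

open scoped Classical in
/-- `σ_k`: the total weight of in-forests with `k` arcs. -/
noncomputable def sigmaW {n : ℕ} (W : Matrix (Fin n) (Fin n) ℝ) (k : ℕ) : ℝ :=
  ∑ A ∈ Finset.univ.powerset.filter
      (fun A => IsInForest W A ∧ A.card = k), forestWeight W A

open scoped Classical in
/-- `Q_k`: the matrix of in-forests with `k` arcs; its `(i,j)` entry is the total
weight of in-forests with `k` arcs in which `i` belongs to a tree rooted at `j`. -/
noncomputable def forestMatrix {n : ℕ} (W : Matrix (Fin n) (Fin n) ℝ) (k : ℕ) :
    Matrix (Fin n) (Fin n) ℝ :=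
  Matrix.of fun i j =>
    ∑ A ∈ Finset.univ.powerset.filter
        (fun A => IsInForest W A ∧ A.card = k ∧ InTreeRootedAt A i j),
      forestWeight W A

open scoped Classical in
/-- `σ`: the total weight of all in-forests. -/
noncomputable def sigmaTot {n : ℕ} (W : Matrix (Fin n) (Fin n) ℝ) : ℝ :=
  ∑ A ∈ Finset.univ.powerset.filter (fun A => IsInForest W A), forestWeight W A

open scoped Classical in
/-- `Q`: the matrix of all in-forests. -/
noncomputable def forestMatrixTot {n : ℕ} (W : Matrix (Fin n) (Fin n) ℝ) :
    Matrix (Fin n) (Fin n) ℝ :=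
  Matrix.of fun i j =>
    ∑ A ∈ Finset.univ.powerset.filter
        (fun A => IsInForest W A ∧ InTreeRootedAt A i j), forestWeight W A

open scoped Classical in
/-- The number of arcs in a maximum in-forest (equal to `n - d` where `d` is the
in-forest dimension). -/
noncomputable def maxForestCard {n : ℕ} (W : Matrix (Fin n) (Fin n) ℝ) : ℕ :=
  (Finset.univ.powerset.filter (fun A => IsInForest W A)).sup Finset.card

/-- The in-forest dimension `d` of the digraph. -/
noncomputable def forestDim {n : ℕ} (W : Matrix (Fin n) (Fin n) ℝ) : ℕ :=
  n - maxForestCard W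

/-- The (row) Laplacian matrix of the weighted digraph with arc-weight matrix `W`. -/
def lap {n : ℕ} (W : Matrix (Fin n) (Fin n) ℝ) : Matrix (Fin n) (Fin n) ℝ :=
  Matrix.diagonal (fun i => ∑ j, W i j) - W

/-- `J̃`: the normalized matrix of maximum in-forests. -/
noncomputable def Jtilde {n : ℕ} (W : Matrix (Fin n) (Fin n) ℝ) :
    Matrix (Fin n) (Fin n) ℝ :=
  (sigmaW W (maxForestCard W))⁻¹ • forestMatrix W (maxForestCard W)
open scoped Classical

namespace ForestAux

variable {n : ℕ} {W : Matrix (Fin n) (Fin n) ℝ}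

/-- Reachability along the arcs of `A`. -/
abbrev Reach (A : Finset (Fin n × Fin n)) : Fin n → Fin n → Prop :=
  Relation.ReflTransGen (fun a b => (a, b) ∈ A)

lemma reach_refl (A : Finset (Fin n × Fin n)) (x : Fin n) : Reach A x x :=
  Relation.ReflTransGen.refl

lemma reach_mono {A B : Finset (Fin n × Fin n)} (h : A ⊆ B) {x y : Fin n}
    (hr : Reach A x y) : Reach B x y :=
  Relation.ReflTransGen.mono (fun a b hab => h hab) x y hr

/-- In a forest, out-arcs are unique. -/
lemma forest_functional (hA : IsInForest W A) {i a b : Fin n}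
    (ha : (i, a) ∈ A) (hb : (i, b) ∈ A) : a = b := by
  have h1 : ((i, a) : Fin n × Fin n) ∈ A.filter (fun e => e.1 = i) := by
    simp [Finset.mem_filter, ha]
  have h2 : ((i, b) : Fin n × Fin n) ∈ A.filter (fun e => e.1 = i) := by
    simp [Finset.mem_filter, hb]
  have := Finset.card_le_one.mp (hA.2.1 i) _ h1 _ h2
  exact (Prod.ext_iff.mp this).2

lemma forest_subset {A B : Finset (Fin n × Fin n)} (hB : B ⊆ A)
    (hA : IsInForest W A) : IsInForest W B := by
  refine ⟨fun e he => hA.1 e (hB he), fun i => ?_, fun i hcyc => hA.2.2 i ?_⟩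
  · exact le_trans (Finset.card_le_card (Finset.filter_subset_filter _ hB)) (hA.2.1 i)
  · exact Relation.TransGen.mono (fun a b hab => hB hab) i i hcyc

/-- In a forest, the target of an out-arc never reaches back to the source. -/
lemma forest_not_reach_back (hA : IsInForest W A) {i p : Fin n}
    (hp : (i, p) ∈ A) (hr : Reach A p i) : False :=
  hA.2.2 i (Relation.TransGen.head' hp hr)

/-- Step towards target. -/
lemma reach_step (hA : IsInForest W A) {i j : Fin n} (hr : Reach A i j)
    (hij : i ≠ j) : ∃ p, (i, p) ∈ A ∧ Reach A p j := by
  rcases Relation.ReflTransGen.cases_head hr with h | ⟨c, hc, hcj⟩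
  · exact absurd h hij
  · exact ⟨c, hc, hcj⟩

/-- If `x` does not reach `i`, then any path from `x` avoids arcs out of `i`,
in particular survives erasing `(i, t)`. -/
lemma reach_erase {A : Finset (Fin n × Fin n)} {i t x y : Fin n}
    (hxi : ¬ Reach A x i) (hr : Reach A x y) : Reach (A.erase (i, t)) x y := by
  induction hr with
  | refl => exact reach_refl _ _
  | tail hxb harc ih =>
    rename_i b c
    have hbi : b ≠ i := fun h => hxi (h ▸ hxb)
    exact Relation.ReflTransGen.tail ih
      (Finset.mem_erase.mpr ⟨by simp [hbi], harc⟩)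

/-- Decomposition of reachability after inserting an arc `(i, l)` with `¬ l ⇝ i`. -/
lemma reach_insert_decomp {A : Finset (Fin n × Fin n)} {i l x y : Fin n}
    (hli : ¬ Reach A l i) (hr : Reach (insert (i, l) A) x y) :
    Reach A x y ∨ (Reach A x i ∧ Reach A l y) := by
  induction hr with
  | refl => exact Or.inl (reach_refl _ _)
  | tail hxy harc ih =>
    rename_i b c
    rcases Finset.mem_insert.mp harc with heq | hmem
    · obtain ⟨hb, hc⟩ := Prod.mk.inj heq
      subst hb; subst hc
      rcases ih with h | ⟨h1, h2⟩
      · exact Or.inr ⟨h, reach_refl _ _⟩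
      · exact absurd h2 hli
    · rcases ih with h | ⟨h1, h2⟩
      · exact Or.inl (h.tail hmem)
      · exact Or.inr ⟨h1, h2.tail hmem⟩

/-- Inserting an arc out of a root with no cycle produced gives a forest. -/
lemma insert_forest (hA : IsInForest W A) {i l : Fin n}
    (hroot : ∀ q, (i, q) ∉ A) (hpos : 0 < W i l) (hil : i ≠ l)
    (hli : ¬ Reach A l i) : IsInForest W (insert (i, l) A) := by
  refine ⟨?_, ?_, ?_⟩
  · rintro e he
    rcases Finset.mem_insert.mp he with rfl | hmem
    · exact ⟨hil, hpos⟩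
    · exact hA.1 e hmem
  · intro q
    rw [Finset.filter_insert]
    by_cases hq : q = i
    · subst hq
      have hemp : A.filter (fun e => e.1 = q) = ∅ :=
        Finset.filter_eq_empty_iff.mpr (by
          rintro ⟨a, b⟩ hab rfl
          exact hroot b hab)
      simp [hemp]
    · have : ¬ ((i, l) : Fin n × Fin n).1 = q := fun h => hq (h ▸ rfl)
      rw [if_neg this]
      exact hA.2.1 q
  · intro x hcyc
    rcases Relation.TransGen.head'_iff.mp hcyc with ⟨c, harc, hrest⟩
    have hrest' : Reach (insert (i, l) A) c x := hrest
    rcases Finset.mem_insert.mp harc with heq | hmem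
    · obtain ⟨hx, hc⟩ := Prod.mk.inj heq
      subst hx; subst hc
      rcases reach_insert_decomp hli hrest' with h | ⟨h1, h2⟩
      · exact hli h
      · exact hli h2
    · rcases reach_insert_decomp hli hrest' with h | ⟨h1, h2⟩
      · exact hA.2.2 x (Relation.TransGen.head' hmem h)
      · -- x → c ⇝ i and l ⇝ x : so l ⇝ i
        exact hli (Relation.ReflTransGen.trans h2
          (Relation.ReflTransGen.head hmem h1))



/-- If `x` reaches both `i` and the root `j`, then `i` reaches `j`. -/
lemma reach_root_factor (hA : IsInForest W A) {x i j : Fin n}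
    (hxi : Reach A x i) (hxj : Reach A x j) (hj : ∀ e ∈ A, e.1 ≠ j) :
    Reach A i j := by
  revert hxi
  induction hxj using Relation.ReflTransGen.head_induction_on with
  | refl =>
    intro hji
    rcases Relation.ReflTransGen.cases_head hji with h | ⟨c, hc, _⟩
    · exact h ▸ reach_refl _ _
    · exact absurd rfl (hj _ hc)
  | head hab hbc ih =>
    rename_i a c
    intro hai
    rcases Relation.ReflTransGen.cases_head hai with h | ⟨c', hc', hci⟩
    · exact h ▸ Relation.ReflTransGen.head hab hbc
    · have hcc : c' = c := forest_functional hA hc' hab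
      exact ih (hcc ▸ hci)

/-- The target of the out-arc of `i` in `A` (junk value `i` if none). -/
noncomputable def tgt (A : Finset (Fin n × Fin n)) (i : Fin n) : Fin n :=
  if h : ∃ t, (i, t) ∈ A then h.choose else i

lemma tgt_mem {A : Finset (Fin n × Fin n)} {i : Fin n}
    (h : ∃ t, (i, t) ∈ A) : (i, tgt A i) ∈ A := by
  rw [tgt, dif_pos h]; exact h.choose_spec

lemma tgt_eq (hA : IsInForest W A) {i q : Fin n} (hq : (i, q) ∈ A) :
    tgt A i = q :=
  forest_functional hA (tgt_mem ⟨q, hq⟩) hq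

lemma forestWeight_pos (hA : IsInForest W A) : 0 < forestWeight W A :=
  Finset.prod_pos fun e he => (hA.1 e he).2

lemma empty_forest : IsInForest W (∅ : Finset (Fin n × Fin n)) := by
  refine ⟨by simp, by simp, fun i hcyc => ?_⟩
  rcases Relation.TransGen.head'_iff.mp hcyc with ⟨c, harc, _⟩
  exact absurd harc (Finset.notMem_empty _)

lemma reach_empty_iff {x y : Fin n} :
    Reach (∅ : Finset (Fin n × Fin n)) x y ↔ x = y := by
  constructor
  · intro h
    rcases Relation.ReflTransGen.cases_head h with h | ⟨c, hc, _⟩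
    · exact h
    · exact absurd hc (Finset.notMem_empty _)
  · rintro rfl; exact reach_refl _ _

/-- The involution underlying the forest recursion. -/
noncomputable def psi (i : Fin n) :
    Option (Fin n) × Finset (Fin n × Fin n) → Option (Fin n) × Finset (Fin n × Fin n)
  | (none, B) =>
      if h : ∃ q, (i, q) ∈ B then (some (tgt B i), B.erase (i, tgt B i))
      else (none, B)
  | (some l, A) =>
      if Reach A l i then (some l, A)
      else if h : ∃ q, (i, q) ∈ A then
        (some (tgt A i), insert (i, l) (A.erase (i, tgt A i)))
      else (none, insert (i, l) A)

variable (W) in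
def P1 (k : ℕ) (i j : Fin n) : Option (Fin n) × Finset (Fin n × Fin n) → Prop
  | (none, B) => IsInForest W B ∧ B.card = k + 1 ∧ InTreeRootedAt B i j
  | (some l, A) => IsInForest W A ∧ A.card = k ∧ InTreeRootedAt A i j ∧ W i l ≠ 0

variable (W) in
def P2 (k : ℕ) (i j : Fin n) : Option (Fin n) × Finset (Fin n × Fin n) → Prop
  | (none, B) => i = j ∧ IsInForest W B ∧ B.card = k + 1
  | (some l, A) => IsInForest W A ∧ A.card = k ∧ InTreeRootedAt A l j ∧ W i l ≠ 0

variable (W) in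
noncomputable def wt (i : Fin n) : Option (Fin n) × Finset (Fin n × Fin n) → ℝ
  | (none, B) => forestWeight W B
  | (some l, A) => W i l * forestWeight W A

section Main

variable (hW : ∀ i j, 0 ≤ W i j) (hdiag : ∀ i, W i i = 0)
include hW hdiag

lemma pos_of_ne {i l : Fin n} (h : W i l ≠ 0) : 0 < W i l ∧ l ≠ i ∧ i ≠ l := by
  refine ⟨(hW i l).lt_of_ne (Ne.symm h), ?_, ?_⟩ <;>
    · rintro rfl; exact h (hdiag _)

omit hW hdiag in
/-- `i ∈ T_j(B)` and `(i,t) ∈ B` gives `t ∈ T_j(B ∖ (i,t))`. -/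
lemma erase_mem_tree {B : Finset (Fin n × Fin n)} {i j t : Fin n}
    (hB : IsInForest W B) (ht : (i, t) ∈ B) (hij : InTreeRootedAt B i j) :
    InTreeRootedAt (B.erase (i, t)) t j := by
  have hinej : i ≠ j := hij.2 _ ht
  obtain ⟨p, hp, hpj⟩ := reach_step hB hij.1 hinej
  have hpt : p = t := forest_functional hB hp ht
  subst hpt
  have hnr : ¬ Reach B p i := fun h => forest_not_reach_back hB ht h
  exact ⟨reach_erase hnr hpj, fun e he => hij.2 e (Finset.mem_of_mem_erase he)⟩

end Main

lemma swap_root {A : Finset (Fin n × Fin n)} {i t : Fin n} (hA : IsInForest W A)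
    (ht : (i, t) ∈ A) : ∀ q, (i, q) ∉ A.erase (i, t) := by
  intro q hq
  have hqt : q = t := forest_functional hA (Finset.mem_of_mem_erase hq) ht
  subst hqt
  exact (Finset.notMem_erase _ _) hq

lemma swap_forest {A : Finset (Fin n × Fin n)} {i t l : Fin n}
    (hA : IsInForest W A) (ht : (i, t) ∈ A) (hli : ¬ Reach A l i)
    (hpos : 0 < W i l) (hil : i ≠ l) :
    IsInForest W (insert (i, l) (A.erase (i, t))) := by
  refine insert_forest (forest_subset (Finset.erase_subset _ _) hA)
    (swap_root hA ht) hpos hil ?_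
  exact fun h => hli (reach_mono (Finset.erase_subset _ _) h)

lemma not_mem_swap {A : Finset (Fin n × Fin n)} {i t l : Fin n}
    (hA : IsInForest W A) (ht : (i, t) ∈ A) :
    ((i, l) : Fin n × Fin n) ∉ A.erase (i, t) :=
  fun h => swap_root hA ht l h

section Main2

variable (hW : ∀ i j, 0 ≤ W i j) (hdiag : ∀ i, W i i = 0)
include hW hdiag

lemma P1_psi {k : ℕ} {i j : Fin n} {x : Option (Fin n) × Finset (Fin n × Fin n)}
    (h : P1 W k i j x) : P2 W k i j (psi i x) := by
  obtain ⟨o, A⟩ := x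
  match o with
  | none =>
    obtain ⟨hB, hcard, hij⟩ := h
    by_cases hex : ∃ q, (i, q) ∈ A
    · rw [psi, dif_pos hex]
      have ht := tgt_mem hex
      refine ⟨forest_subset (Finset.erase_subset _ _) hB, ?_, erase_mem_tree hB ht hij,
        (hB.1 _ ht).2.ne'⟩
      rw [Finset.card_erase_of_mem ht, hcard]
      omega
    · rw [psi, dif_neg hex]
      have hij' : i = j := by
        rcases Relation.ReflTransGen.cases_head hij.1 with h | ⟨c, hc, _⟩
        · exact h
        · exact absurd ⟨c, hc⟩ hex
      exact ⟨hij', hB, hcard⟩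
  | some l =>
    obtain ⟨hA, hcard, hij, hne⟩ := h
    obtain ⟨hpos, hli', hil⟩ := pos_of_ne hW hdiag hne
    by_cases hr : Reach A l i
    · rw [psi, if_pos hr]
      exact ⟨hA, hcard, ⟨Relation.ReflTransGen.trans hr hij.1, hij.2⟩, hne⟩
    · rw [psi, if_neg hr]
      by_cases hex : ∃ q, (i, q) ∈ A
      · rw [dif_pos hex]
        have ht := tgt_mem hex
        set t := tgt A i with htdef
        have hinej : i ≠ j := hij.2 _ ht
        have hnotmem : ((i, l) : Fin n × Fin n) ∉ A.erase (i, t) := not_mem_swap hA ht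
        have hcard1 : 1 ≤ A.card := Finset.card_pos.mpr ⟨_, ht⟩
        refine ⟨swap_forest hA ht hr hpos hil, ?_, ?_, (hA.1 _ ht).2.ne'⟩
        · rw [Finset.card_insert_of_notMem hnotmem, Finset.card_erase_of_mem ht, hcard]
          omega
        · have htree := erase_mem_tree hA ht hij
          refine ⟨reach_mono (Finset.subset_insert _ _) htree.1, ?_⟩
          intro e he
          rcases Finset.mem_insert.mp he with rfl | hmem
          · exact hinej
          · exact hij.2 _ (Finset.mem_of_mem_erase hmem)
      · rw [dif_neg hex]
        push_neg at hex
        have hij' : i = j := by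
          rcases Relation.ReflTransGen.cases_head hij.1 with h | ⟨c, hc, _⟩
          · exact h
          · exact absurd hc (hex c)
        refine ⟨hij', insert_forest hA hex hpos hil hr, ?_⟩
        rw [Finset.card_insert_of_notMem (hex l), hcard]

lemma P2_psi {k : ℕ} {i j : Fin n} {x : Option (Fin n) × Finset (Fin n × Fin n)}
    (h : P2 W k i j x) : P1 W k i j (psi i x) := by
  obtain ⟨o, A⟩ := x
  match o with
  | none =>
    obtain ⟨hij', hB, hcard⟩ := h
    subst hij'
    by_cases hex : ∃ q, (i, q) ∈ A
    · rw [psi, dif_pos hex]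
      have ht := tgt_mem hex
      refine ⟨forest_subset (Finset.erase_subset _ _) hB, ?_, ?_, (hB.1 _ ht).2.ne'⟩
      · rw [Finset.card_erase_of_mem ht, hcard]
        omega
      · refine ⟨reach_refl _ _, ?_⟩
        rintro ⟨a, b⟩ he rfl
        have : b = tgt A a := forest_functional hB (Finset.mem_of_mem_erase he) ht
        subst this
        exact (Finset.notMem_erase _ _) he
    · rw [psi, dif_neg hex]
      refine ⟨hB, hcard, reach_refl _ _, ?_⟩
      rintro ⟨a, b⟩ he rfl
      exact hex ⟨b, he⟩
  | some l =>
    obtain ⟨hA, hcard, hlj, hne⟩ := h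
    obtain ⟨hpos, hli', hil⟩ := pos_of_ne hW hdiag hne
    by_cases hr : Reach A l i
    · rw [psi, if_pos hr]
      exact ⟨hA, hcard, ⟨reach_root_factor hA hr hlj.1 hlj.2, hlj.2⟩, hne⟩
    · rw [psi, if_neg hr]
      by_cases hex : ∃ q, (i, q) ∈ A
      · rw [dif_pos hex]
        have ht := tgt_mem hex
        set t := tgt A i with htdef
        have hinej : i ≠ j := hlj.2 _ ht
        have hnotmem : ((i, l) : Fin n × Fin n) ∉ A.erase (i, t) := not_mem_swap hA ht
        have hcard1 : 1 ≤ A.card := Finset.card_pos.mpr ⟨_, ht⟩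
        refine ⟨swap_forest hA ht hr hpos hil, ?_, ?_, (hA.1 _ ht).2.ne'⟩
        · rw [Finset.card_insert_of_notMem hnotmem, Finset.card_erase_of_mem ht, hcard]
          omega
        · refine ⟨?_, ?_⟩
          · refine Relation.ReflTransGen.head (Finset.mem_insert_self _ _) ?_
            exact reach_mono (Finset.subset_insert _ _) (reach_erase hr hlj.1)
          · intro e he
            rcases Finset.mem_insert.mp he with rfl | hmem
            · exact hinej
            · exact hlj.2 _ (Finset.mem_of_mem_erase hmem)
      · rw [dif_neg hex]
        push_neg at hex
        have hinej : i ≠ j := by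
          rintro rfl
          exact hr hlj.1
        refine ⟨insert_forest hA hex hpos hil hr, ?_, ?_, ?_⟩
        · rw [Finset.card_insert_of_notMem (hex l), hcard]
        · refine Relation.ReflTransGen.head (Finset.mem_insert_self _ _) ?_
          exact reach_mono (Finset.subset_insert _ _) hlj.1
        · intro e he
          rcases Finset.mem_insert.mp he with rfl | hmem
          · exact hinej
          · exact hlj.2 _ hmem

end Main2

lemma tgt_insert_eq {A : Finset (Fin n × Fin n)} {i l : Fin n}
    (hni : ∀ q, (i, q) ∉ A) : tgt (insert (i, l) A) i = l := by
  have hmem := tgt_mem (A := insert (i, l) A) (i := i) ⟨l, Finset.mem_insert_self _ _⟩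
  rcases Finset.mem_insert.mp hmem with heq | hmem'
  · exact (Prod.mk.inj heq).2
  · exact absurd hmem' (hni _)

lemma psi_psi_none {i : Fin n} {B : Finset (Fin n × Fin n)} (hB : IsInForest W B) :
    psi i (psi i (none, B)) = (none, B) := by
  by_cases hex : ∃ q, (i, q) ∈ B
  · rw [psi, dif_pos hex]
    have ht := tgt_mem hex
    set t := tgt B i with htdef
    have hr : ¬ Reach (B.erase (i, t)) t i := fun h =>
      forest_not_reach_back hB ht (reach_mono (Finset.erase_subset _ _) h)
    have hex2 : ¬ ∃ q, (i, q) ∈ B.erase (i, t) := fun ⟨q, hq⟩ => swap_root hB ht q hq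
    rw [psi, if_neg hr, dif_neg hex2, Finset.insert_erase ht]
  · rw [psi, dif_neg hex, psi, dif_neg hex]

lemma psi_psi_some {i l : Fin n} {A : Finset (Fin n × Fin n)} (hA : IsInForest W A) :
    psi i (psi i (some l, A)) = (some l, A) := by
  by_cases hr : Reach A l i
  · rw [psi, if_pos hr, psi, if_pos hr]
  · have hli : l ≠ i := fun h => hr (h ▸ reach_refl _ _)
    rw [psi, if_neg hr]
    by_cases hex : ∃ q, (i, q) ∈ A
    · rw [dif_pos hex]
      have ht := tgt_mem hex
      set t := tgt A i with htdef
      set A0 := A.erase (i, t) with hA0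
      have hnil : ((i, l) : Fin n × Fin n) ∉ A0 := not_mem_swap hA ht
      have hli0 : ¬ Reach A0 l i := fun h => hr (reach_mono (Finset.erase_subset _ _) h)
      have hr2 : ¬ Reach (insert (i, l) A0) t i := by
        intro h
        rcases reach_insert_decomp hli0 h with h' | ⟨h', _⟩ <;>
          exact forest_not_reach_back hA ht (reach_mono (Finset.erase_subset _ _) h')
      have hex2 : ∃ q, (i, q) ∈ insert (i, l) A0 := ⟨l, Finset.mem_insert_self _ _⟩
      have htgt2 : tgt (insert (i, l) A0) i = l := tgt_insert_eq (swap_root hA ht)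
      rw [psi, if_neg hr2, dif_pos hex2, htgt2, Finset.erase_insert hnil,
        Finset.insert_erase ht]
    · rw [dif_neg hex]
      push_neg at hex
      have hex2 : ∃ q, (i, q) ∈ insert (i, l) A := ⟨l, Finset.mem_insert_self _ _⟩
      have htgt2 : tgt (insert (i, l) A) i = l := tgt_insert_eq hex
      rw [psi, dif_pos hex2, htgt2, Finset.erase_insert (hex l)]

lemma wt_psi {i : Fin n} {x : Option (Fin n) × Finset (Fin n × Fin n)}
    (hx : IsInForest W x.2) : wt W i (psi i x) = wt W i x := by
  obtain ⟨o, A⟩ := x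
  simp only at hx
  match o with
  | none =>
    by_cases hex : ∃ q, (i, q) ∈ A
    · rw [psi, dif_pos hex]
      have ht := tgt_mem hex
      show W i (tgt A i) * forestWeight W (A.erase (i, tgt A i)) = forestWeight W A
      exact Finset.mul_prod_erase A (fun e => W e.1 e.2) ht
    · rw [psi, dif_neg hex]
  | some l =>
    by_cases hr : Reach A l i
    · rw [psi, if_pos hr]
    · rw [psi, if_neg hr]
      by_cases hex : ∃ q, (i, q) ∈ A
      · rw [dif_pos hex]
        have ht := tgt_mem hex
        have hnil : ((i, l) : Fin n × Fin n) ∉ A.erase (i, tgt A i) := not_mem_swap hx ht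
        show W i (tgt A i) * forestWeight W (insert (i, l) (A.erase (i, tgt A i)))
          = W i l * forestWeight W A
        rw [forestWeight, Finset.prod_insert hnil]
        show W i (tgt A i) * (W i l * forestWeight W (A.erase (i, tgt A i))) = _
        rw [← mul_assoc, mul_comm (W i (tgt A i)) (W i l), mul_assoc]
        congr 1
        exact Finset.mul_prod_erase A (fun e => W e.1 e.2) ht
      · rw [dif_neg hex]
        push_neg at hex
        show forestWeight W (insert (i, l) A) = W i l * forestWeight W A
        rw [forestWeight, Finset.prod_insert (hex l)]
        rfl

lemma P_forest {k : ℕ} {i j : Fin n} {x : Option (Fin n) × Finset (Fin n × Fin n)}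
    (h : P1 W k i j x ∨ P2 W k i j x) : IsInForest W x.2 := by
  obtain ⟨o, A⟩ := x
  match o with
  | none => rcases h with h | h; exacts [h.1, h.2.1]
  | some l => rcases h with h | h; exacts [h.1, h.1]

lemma psi_psi {i : Fin n} {x : Option (Fin n) × Finset (Fin n × Fin n)}
    (hx : IsInForest W x.2) : psi i (psi i x) = x := by
  obtain ⟨o, A⟩ := x
  match o with
  | none => exact psi_psi_none hx
  | some l => exact psi_psi_some hx

lemma forestMatrix_eq_sum (k : ℕ) (i j : Fin n) :
    forestMatrix W k i j = ∑ A : Finset (Fin n × Fin n),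
      if IsInForest W A ∧ A.card = k ∧ InTreeRootedAt A i j then forestWeight W A
      else 0 := by
  rw [forestMatrix, Matrix.of_apply, Finset.powerset_univ, Finset.sum_filter]

lemma sigmaW_eq_sum (k : ℕ) :
    sigmaW W k = ∑ A : Finset (Fin n × Fin n),
      if IsInForest W A ∧ A.card = k then forestWeight W A else 0 := by
  rw [sigmaW, Finset.powerset_univ, Finset.sum_filter]

section Main3

variable (hW : ∀ i j, 0 ≤ W i j) (hdiag : ∀ i, W i i = 0)
include hW hdiag

lemma key_identity (k : ℕ) (i j : Fin n) :
    forestMatrix W (k + 1) i j + (∑ l, W i l) * forestMatrix W k i j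
      = (if i = j then sigmaW W (k + 1) else 0)
        + ∑ l, W i l * forestMatrix W k l j := by
  have hS : ∑ x ∈ Finset.univ.filter (P1 W k i j), wt W i x
      = ∑ x ∈ Finset.univ.filter (P2 W k i j), wt W i x := by
    refine Finset.sum_bij' (fun x _ => psi i x) (fun x _ => psi i x) ?_ ?_ ?_ ?_ ?_
    · intro a ha
      exact Finset.mem_filter.mpr ⟨Finset.mem_univ _,
        P1_psi hW hdiag (Finset.mem_filter.mp ha).2⟩
    · intro a ha
      exact Finset.mem_filter.mpr ⟨Finset.mem_univ _,
        P2_psi hW hdiag (Finset.mem_filter.mp ha).2⟩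
    · intro a ha
      exact psi_psi (P_forest (Or.inl (Finset.mem_filter.mp ha).2))
    · intro a ha
      exact psi_psi (P_forest (Or.inr (Finset.mem_filter.mp ha).2))
    · intro a ha
      exact (wt_psi (P_forest (Or.inl (Finset.mem_filter.mp ha).2))).symm
  have h1 : ∑ x ∈ Finset.univ.filter (P1 W k i j), wt W i x
      = forestMatrix W (k + 1) i j + (∑ l, W i l) * forestMatrix W k i j := by
    rw [Finset.sum_filter, Fintype.sum_prod_type, Fintype.sum_option]
    congr 1
    · rw [forestMatrix_eq_sum]
      exact Finset.sum_congr rfl fun A _ => by exact if_congr Iff.rfl rfl rfl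
    · rw [Finset.sum_mul]
      refine Finset.sum_congr rfl fun l _ => ?_
      by_cases h0 : W i l = 0
      · simp [P1, wt, h0]
      · rw [forestMatrix_eq_sum, Finset.mul_sum]
        refine Finset.sum_congr rfl fun A _ => ?_
        rw [mul_ite, mul_zero]
        exact if_congr (by simp [P1, h0, and_assoc]) rfl rfl
  have h2 : ∑ x ∈ Finset.univ.filter (P2 W k i j), wt W i x
      = (if i = j then sigmaW W (k + 1) else 0)
        + ∑ l, W i l * forestMatrix W k l j := by
    rw [Finset.sum_filter, Fintype.sum_prod_type, Fintype.sum_option]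
    congr 1
    · by_cases hij : i = j
      · rw [if_pos hij, sigmaW_eq_sum]
        exact Finset.sum_congr rfl fun A _ => by simp [P2, wt, hij]
      · rw [if_neg hij]
        refine Finset.sum_eq_zero fun A _ => by simp [P2, hij]
    · refine Finset.sum_congr rfl fun l _ => ?_
      by_cases h0 : W i l = 0
      · simp [P2, wt, h0]
      · rw [forestMatrix_eq_sum, Finset.mul_sum]
        refine Finset.sum_congr rfl fun A _ => ?_
        rw [mul_ite, mul_zero]
        exact if_congr (by simp [P2, h0, and_assoc]) rfl rfl
  rw [← h1, hS, h2]

end Main3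

lemma inTree_empty_iff {i j : Fin n} :
    InTreeRootedAt (∅ : Finset (Fin n × Fin n)) i j ↔ i = j := by
  constructor
  · intro h
    exact reach_empty_iff.mp h.1
  · rintro rfl
    exact ⟨reach_refl _ _, by simp⟩

lemma forestMatrix_zero : forestMatrix W 0 = (1 : Matrix (Fin n) (Fin n) ℝ) := by
  ext i j
  rw [forestMatrix_eq_sum, Matrix.one_apply]
  rw [Finset.sum_eq_single (∅ : Finset (Fin n × Fin n))]
  · simp [empty_forest, inTree_empty_iff, forestWeight]
  · intro A _ hne
    rw [if_neg]
    rintro ⟨-, hcard, -⟩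
    exact hne (Finset.card_eq_zero.mp hcard)
  · simp
lemma sigmaW_zero : sigmaW W 0 = 1 := by
  rw [sigmaW_eq_sum]
  rw [Finset.sum_eq_single (∅ : Finset (Fin n × Fin n))]
  · simp [empty_forest, forestWeight]
  · intro A _ hne
    rw [if_neg]
    rintro ⟨-, hcard⟩
    exact hne (Finset.card_eq_zero.mp hcard)
  · simp

lemma card_le_max {A : Finset (Fin n × Fin n)} (hA : IsInForest W A) :
    A.card ≤ maxForestCard W :=
  Finset.le_sup (Finset.mem_filter.mpr
    ⟨Finset.mem_powerset.mpr (Finset.subset_univ _), hA⟩)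

lemma forestMatrix_max_succ : forestMatrix W (maxForestCard W + 1) = 0 := by
  ext i j
  rw [forestMatrix_eq_sum]
  refine Finset.sum_eq_zero fun A _ => ?_
  rw [if_neg]
  rintro ⟨hA, hcard, -⟩
  have := card_le_max hA
  omega

lemma sigmaW_max_succ : sigmaW W (maxForestCard W + 1) = 0 := by
  rw [sigmaW_eq_sum]
  refine Finset.sum_eq_zero fun A _ => ?_
  rw [if_neg]
  rintro ⟨hA, hcard⟩
  have := card_le_max hA
  omega

lemma sigmaW_nonneg (k : ℕ) : 0 ≤ sigmaW W k := by
  rw [sigmaW_eq_sum]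
  refine Finset.sum_nonneg fun A _ => ?_
  split_ifs with h
  · exact (forestWeight_pos h.1).le
  · exact le_refl 0
lemma sigma_max_pos : 0 < sigmaW W (maxForestCard W) := by
  have hne : (Finset.univ.powerset.filter
      (fun A => IsInForest W (n := n) A)).Nonempty :=
    ⟨∅, Finset.mem_filter.mpr ⟨by simp, empty_forest⟩⟩
  obtain ⟨A, hAmem, hsup⟩ := Finset.exists_mem_eq_sup _ hne Finset.card
  have hA : IsInForest W A := (Finset.mem_filter.mp hAmem).2
  rw [sigmaW]
  refine Finset.sum_pos (fun B hB => forestWeight_pos (Finset.mem_filter.mp hB).2.1) ?_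
  have hcard : A.card = maxForestCard W := by
    rw [maxForestCard]; exact hsup.symm
  exact ⟨A, Finset.mem_filter.mpr ⟨Finset.mem_powerset.mpr (Finset.subset_univ _),
    hA, hcard⟩⟩

section Main4

variable (hW : ∀ i j, 0 ≤ W i j) (hdiag : ∀ i, W i i = 0)
include hW hdiag

lemma lap_mul_forestMatrix (k : ℕ) :
    lap W * forestMatrix W k
      = sigmaW W (k + 1) • (1 : Matrix (Fin n) (Fin n) ℝ) - forestMatrix W (k + 1) := by
  ext i j
  have hmul : (lap W * forestMatrix W k) i j
      = (∑ l, W i l) * forestMatrix W k i j - ∑ l, W i l * forestMatrix W k l j := by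
    rw [lap, Matrix.sub_mul, Matrix.sub_apply, Matrix.diagonal_mul, Matrix.mul_apply]
  have hkey := key_identity hW hdiag k i j
  rw [hmul, Matrix.sub_apply, Matrix.smul_apply, Matrix.one_apply, smul_eq_mul]
  by_cases hij : i = j
  · rw [if_pos hij] at hkey
    rw [if_pos hij, mul_one]
    linarith
  · rw [if_neg hij] at hkey
    rw [if_neg hij, mul_zero]
    linarith

end Main4

section Main5

variable (hW : ∀ i j, 0 ≤ W i j) (hdiag : ∀ i, W i i = 0)
include hW hdiag

lemma resolvent_identity (τ : ℝ) :
    (1 + τ • lap W) * (∑ k ∈ Finset.range (maxForestCard W + 1),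
        τ ^ k • forestMatrix W k)
      = (∑ k ∈ Finset.range (maxForestCard W + 1), τ ^ k * sigmaW W k)
          • (1 : Matrix (Fin n) (Fin n) ℝ) := by
  set m := maxForestCard W with hm
  set f : ℕ → Matrix (Fin n) (Fin n) ℝ :=
    fun k => τ ^ k • forestMatrix W k - (τ ^ k * sigmaW W k) • 1 with hf
  have hstep : ∀ k, (1 + τ • lap W) * (τ ^ k • forestMatrix W k)
      = (f k - f (k + 1)) + (τ ^ k * sigmaW W k) • 1 := by
    intro k
    have hlap := lap_mul_forestMatrix hW hdiag k
    rw [add_mul, one_mul, Matrix.smul_mul, Matrix.mul_smul, hlap]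
    rw [hf]
    simp only [smul_sub, smul_smul]
    rw [pow_succ]
    module
  rw [Finset.mul_sum]
  calc ∑ k ∈ Finset.range (m + 1), (1 + τ • lap W) * (τ ^ k • forestMatrix W k)
      = ∑ k ∈ Finset.range (m + 1), ((f k - f (k + 1)) + (τ ^ k * sigmaW W k) • 1) :=
        Finset.sum_congr rfl fun k _ => hstep k
    _ = (∑ k ∈ Finset.range (m + 1), (f k - f (k + 1)))
        + ∑ k ∈ Finset.range (m + 1), (τ ^ k * sigmaW W k) • 1 := by
        rw [Finset.sum_add_distrib]
    _ = (f 0 - f (m + 1)) + ∑ k ∈ Finset.range (m + 1), (τ ^ k * sigmaW W k) • 1 := by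
        rw [Finset.sum_range_sub' f]
    _ = ∑ k ∈ Finset.range (m + 1), (τ ^ k * sigmaW W k) • 1 := by
        have h0 : f 0 = 0 := by
          rw [hf]
          simp [forestMatrix_zero, sigmaW_zero]
        have hm1 : f (m + 1) = 0 := by
          rw [hf]
          simp [hm, forestMatrix_max_succ, sigmaW_max_succ]
        rw [h0, hm1]
        simp
    _ = (∑ k ∈ Finset.range (m + 1), τ ^ k * sigmaW W k) • 1 := by
        rw [Finset.sum_smul]

omit hW hdiag in
lemma sigmaP_pos {τ : ℝ} (hτ : 0 ≤ τ) :
    0 < ∑ k ∈ Finset.range (maxForestCard W + 1), τ ^ k * sigmaW W k := by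
  refine Finset.sum_pos' (fun k _ => mul_nonneg (pow_nonneg hτ k) (sigmaW_nonneg k)) ?_
  exact ⟨0, Finset.mem_range.mpr (Nat.succ_pos _), by simp [sigmaW_zero]⟩

lemma resolvent_inv_eq {τ : ℝ} (hτ : 0 ≤ τ) :
    (1 + τ • lap W)⁻¹
      = (∑ k ∈ Finset.range (maxForestCard W + 1), τ ^ k * sigmaW W k)⁻¹
          • (∑ k ∈ Finset.range (maxForestCard W + 1), τ ^ k • forestMatrix W k) := by
  have hpos := sigmaP_pos (W := W) hτ
  apply Matrix.inv_eq_right_inv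
  rw [Matrix.mul_smul, resolvent_identity hW hdiag τ, smul_smul,
    inv_mul_cancel₀ hpos.ne', one_smul]

end Main5
end ForestAux

/-- `J̃ = lim_{τ→∞} (I + τL)⁻¹`. -/
theorem Jtilde_eq_limit {n : ℕ} (W : Matrix (Fin n) (Fin n) ℝ)
    (hn : 1 < n) (hW : ∀ i j, 0 ≤ W i j) (hdiag : ∀ i, W i i = 0) :
    Filter.Tendsto (fun τ : ℝ => (1 + τ • lap W)⁻¹) Filter.atTop
      (nhds (Jtilde W)) := by
  classical
  set m := maxForestCard W with hm
  have hσm : 0 < sigmaW W m := ForestAux.sigma_max_pos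
  set σp : ℝ → ℝ := fun τ => ∑ k ∈ Finset.range (m + 1), τ ^ k * sigmaW W k with hσp
  set Qp : ℝ → Matrix (Fin n) (Fin n) ℝ :=
    fun τ => ∑ k ∈ Finset.range (m + 1), τ ^ k • forestMatrix W k with hQp
  have hsplit : ∀ (τ : ℝ) (k : ℕ), k ≤ m → τ ^ m = τ ^ k * τ ^ (m - k) := by
    intro τ k hk
    rw [← pow_add]
    congr 1
    omega
  have hmem : m ∈ Finset.range (m + 1) := Finset.mem_range.mpr (Nat.lt_succ_self m)
  have hinvlim : ∀ k ∈ Finset.range (m + 1), k ≠ m →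
      Filter.Tendsto (fun τ : ℝ => (τ ^ (m - k))⁻¹) Filter.atTop (nhds 0) := by
    intro k hk hkm
    have hk' : k < m := by
      have := Finset.mem_range.mp hk
      omega
    have := Filter.Tendsto.inv_tendsto_atTop
      (Filter.tendsto_pow_atTop (n := m - k) (α := ℝ) (by omega))
    simp only [Pi.inv_def] at this; exact this
  have hlim1 : Filter.Tendsto (fun τ : ℝ => σp τ / τ ^ m) Filter.atTop
      (nhds (sigmaW W m)) := by
    have hev : (fun τ : ℝ => ∑ k ∈ Finset.range (m + 1),
          sigmaW W k * (τ ^ (m - k))⁻¹) =ᶠ[Filter.atTop]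
        (fun τ : ℝ => σp τ / τ ^ m) := by
      filter_upwards [Filter.eventually_gt_atTop (0 : ℝ)] with τ hτ
      simp only [hσp]
      rw [Finset.sum_div]
      refine Finset.sum_congr rfl fun k hk => ?_
      have hk' : k ≤ m := Nat.lt_succ_iff.mp (Finset.mem_range.mp hk)
      rw [hsplit τ k hk', mul_div_mul_left _ _ (pow_ne_zero k hτ.ne'),
        div_eq_mul_inv]
    refine Filter.Tendsto.congr' hev ?_
    have htarget : sigmaW W m
        = ∑ k ∈ Finset.range (m + 1), (if k = m then sigmaW W m else 0) := by
      rw [Finset.sum_ite_eq' (Finset.range (m + 1)) m (fun _ => sigmaW W m),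
        if_pos hmem]
    rw [htarget]
    refine tendsto_finset_sum _ fun k hk => ?_
    by_cases hkm : k = m
    · subst hkm
      simp only [if_pos rfl, Nat.sub_self, pow_zero, inv_one, mul_one]
      exact tendsto_const_nhds
    · rw [if_neg hkm]
      have := (hinvlim k hk hkm).const_mul (sigmaW W k)
      simpa using this
  have hlim2 : Filter.Tendsto (fun τ : ℝ => (τ ^ m)⁻¹ • Qp τ) Filter.atTop
      (nhds (forestMatrix W m)) := by
    have hev : (fun τ : ℝ => ∑ k ∈ Finset.range (m + 1),
          (τ ^ (m - k))⁻¹ • forestMatrix W k) =ᶠ[Filter.atTop]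
        (fun τ : ℝ => (τ ^ m)⁻¹ • Qp τ) := by
      filter_upwards [Filter.eventually_gt_atTop (0 : ℝ)] with τ hτ
      simp only [hQp]
      rw [Finset.smul_sum]
      refine Finset.sum_congr rfl fun k hk => ?_
      have hk' : k ≤ m := Nat.lt_succ_iff.mp (Finset.mem_range.mp hk)
      rw [smul_smul]
      congr 1
      have h1 : (τ ^ k : ℝ) ≠ 0 := pow_ne_zero k hτ.ne'
      have h2 : (τ ^ (m - k) : ℝ) ≠ 0 := pow_ne_zero _ hτ.ne'
      rw [hsplit τ k hk']
      field_simp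
    refine Filter.Tendsto.congr' hev ?_
    have htarget : forestMatrix W m
        = ∑ k ∈ Finset.range (m + 1),
            (if k = m then forestMatrix W m else 0) := by
      rw [Finset.sum_ite_eq' (Finset.range (m + 1)) m (fun _ => forestMatrix W m),
        if_pos hmem]
    rw [htarget]
    refine tendsto_finset_sum _ fun k hk => ?_
    by_cases hkm : k = m
    · subst hkm
      simp only [if_pos rfl, Nat.sub_self, pow_zero, inv_one]
      have h : Filter.Tendsto (fun _ : ℝ => (1:ℝ) • forestMatrix W m)
          Filter.atTop (nhds ((1:ℝ) • forestMatrix W m)) := tendsto_const_nhds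
      simp only [one_smul] at h
      simp only [one_smul, if_true]
      exact h
    · rw [if_neg hkm]
      have := (hinvlim k hk hkm).smul_const (forestMatrix W k)
      simpa using this
  have hinv : Filter.Tendsto (fun τ : ℝ => (σp τ / τ ^ m)⁻¹) Filter.atTop
      (nhds (sigmaW W m)⁻¹) := hlim1.inv₀ hσm.ne'
  have hJ : Filter.Tendsto
      (fun τ : ℝ => (σp τ / τ ^ m)⁻¹ • ((τ ^ m)⁻¹ • Qp τ)) Filter.atTop
      (nhds ((sigmaW W m)⁻¹ • forestMatrix W m)) := hinv.smul hlim2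
  have hev2 : (fun τ : ℝ => (σp τ / τ ^ m)⁻¹ • ((τ ^ m)⁻¹ • Qp τ))
      =ᶠ[Filter.atTop] (fun τ : ℝ => (1 + τ • lap W)⁻¹) := by
    filter_upwards [Filter.eventually_gt_atTop (0 : ℝ)] with τ hτ
    have hR := ForestAux.resolvent_inv_eq (W := W) hW hdiag hτ.le
    rw [← hm] at hR
    rw [hR, smul_smul]
    congr 1
    have h1 : (τ ^ m : ℝ) ≠ 0 := pow_ne_zero m hτ.ne'
    have h2 : σp τ ≠ 0 := by
      have := ForestAux.sigmaP_pos (W := W) hτ.le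
      rw [← hm] at this
      exact this.ne'
    field_simp
    rw [hσp]
    simp only [hσp] at h2
    field_simp
  have hJt : Jtilde W = (sigmaW W m)⁻¹ • forestMatrix W m := rfl
  rw [hJt]
  exact Filter.Tendsto.congr' hev2 hJ
end

section
/- The Laplacian matrix L has index 1, rank L = n − d, the null space of L equals the range of J̃, the range of L equals the null space of J̃, and J̃ is the eigenprojection of L at 0 (the projection onto N(L) along R(L)). -/
open Matrix Finset Polynomial

namespace MFT

open Finset Relation

variable {n : ℕ}

/-- The step relation of an arc set. -/
abbrev stp (A : Finset (Fin n × Fin n)) : Fin n → Fin n → Prop :=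
  fun a b => (a, b) ∈ A

abbrev rtg (A : Finset (Fin n × Fin n)) : Fin n → Fin n → Prop :=
  Relation.ReflTransGen (stp A)

/-- out-degree at most one -/
def Deg1 (A : Finset (Fin n × Fin n)) : Prop :=
  ∀ i : Fin n, (A.filter (fun e => e.1 = i)).card ≤ 1

def Acyc (A : Finset (Fin n × Fin n)) : Prop :=
  ∀ i : Fin n, ¬ Relation.TransGen (stp A) i i

def IsRoot (A : Finset (Fin n × Fin n)) (x : Fin n) : Prop :=
  ∀ e ∈ A, e.1 ≠ x

theorem out_unique {A : Finset (Fin n × Fin n)} (h : Deg1 A) {x y z : Fin n}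
    (hy : (x, y) ∈ A) (hz : (x, z) ∈ A) : y = z := by
  classical
  have hy' : (x, y) ∈ A.filter (fun e => e.1 = x) := by simp [hy]
  have hz' : (x, z) ∈ A.filter (fun e => e.1 = x) := by simp [hz]
  have := Finset.card_le_one.mp (h x) _ hy' _ hz'
  exact congrArg Prod.snd this

theorem eq_of_isRoot_rtg {A : Finset (Fin n × Fin n)} {x b : Fin n}
    (hroot : IsRoot A x) (h : rtg A x b) : x = b := by
  rcases (Relation.ReflTransGen.cases_head h) with rfl | ⟨c, hc, _⟩
  · rfl
  · exact absurd rfl (hroot _ hc)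

theorem rtg_mono {A B : Finset (Fin n × Fin n)} (hAB : A ⊆ B) {x y : Fin n}
    (h : rtg A x y) : rtg B x y :=
  Relation.ReflTransGen.mono (fun a b hab => hAB hab) _ _ h

/-- determinism: the walk from a vertex is linearly ordered -/
theorem rtg_total {A : Finset (Fin n × Fin n)} (h : Deg1 A) {a b : Fin n} :
    ∀ {x : Fin n}, rtg A x a → rtg A x b → rtg A a b ∨ rtg A b a := by
  intro x hxa
  induction hxa using Relation.ReflTransGen.head_induction_on with
  | refl => intro hab; exact Or.inl hab
  | head h' htail ih =>
    rename_i x' c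
    intro hxb
    rcases Relation.ReflTransGen.cases_head hxb with rfl | ⟨c', hc', hcb⟩
    · exact Or.inr (Relation.ReflTransGen.head h' htail)
    · have : c = c' := out_unique h h' hc'
      subst this
      exact ih hcb

/-- paths to the source of a removed arc survive removal -/
theorem rtg_erase_to_source {A : Finset (Fin n × Fin n)} {a : Fin n × Fin n}
    {v : Fin n} (h : rtg A v a.1) : rtg (A.erase a) v a.1 := by
  classical
  induction h using Relation.ReflTransGen.head_induction_on with
  | refl => exact Relation.ReflTransGen.refl
  | head h' htail ih =>
    rename_i x c
    by_cases hxa : (x, c) = a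
    · have : x = a.1 := by rw [← hxa]
      subst this; exact Relation.ReflTransGen.refl
    · exact Relation.ReflTransGen.head (Finset.mem_erase.mpr ⟨hxa, h'⟩) ih

/-- decomposition of paths after erasing an arc -/
theorem rtg_erase_cases {A : Finset (Fin n × Fin n)} {a : Fin n × Fin n}
    {x y : Fin n} (h : rtg A x y) :
    rtg (A.erase a) x y ∨ (rtg (A.erase a) x a.1 ∧ rtg A a.2 y) := by
  classical
  induction h using Relation.ReflTransGen.head_induction_on with
  | refl => exact Or.inl Relation.ReflTransGen.refl
  | head h' htail ih =>
    rename_i x' c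
    by_cases hxa : (x', c) = a
    · refine Or.inr ⟨?_, ?_⟩
      · have : x' = a.1 := by rw [← hxa]
        subst this; exact Relation.ReflTransGen.refl
      · have : c = a.2 := by rw [← hxa]
        subst this; exact htail
    · rcases ih with h1 | ⟨h1, h2⟩
      · exact Or.inl (Relation.ReflTransGen.head (Finset.mem_erase.mpr ⟨hxa, h'⟩) h1)
      · exact Or.inr ⟨Relation.ReflTransGen.head (Finset.mem_erase.mpr ⟨hxa, h'⟩) h1, h2⟩

/-- decomposition of paths in `insert a A` -/
theorem rtg_insert_cases {A : Finset (Fin n × Fin n)} {a : Fin n × Fin n}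
    {x y : Fin n} (h : rtg (insert a A) x y) :
    rtg A x y ∨ (rtg A x a.1 ∧ rtg (insert a A) a.2 y) := by
  classical
  induction h using Relation.ReflTransGen.head_induction_on with
  | refl => exact Or.inl Relation.ReflTransGen.refl
  | head h' htail ih =>
    rename_i x' c
    rcases Finset.mem_insert.mp h' with hxa | hmem
    · have h1 : x' = a.1 := congrArg Prod.fst hxa
      have h2 : c = a.2 := congrArg Prod.snd hxa
      subst h1; subst h2
      exact Or.inr ⟨Relation.ReflTransGen.refl, htail⟩
    · rcases ih with h1 | ⟨h1, h2⟩
      · exact Or.inl (Relation.ReflTransGen.head hmem h1)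
      · exact Or.inr ⟨Relation.ReflTransGen.head hmem h1, h2⟩

theorem rtg_insert_cases' {A : Finset (Fin n × Fin n)} {a : Fin n × Fin n}
    {x y : Fin n} (hcyc : ¬ rtg A a.2 a.1) (h : rtg (insert a A) x y) :
    rtg A x y ∨ (rtg A x a.1 ∧ rtg A a.2 y) := by
  rcases rtg_insert_cases h with h1 | ⟨h1, h2⟩
  · exact Or.inl h1
  · rcases rtg_insert_cases h2 with h3 | ⟨h3, _⟩
    · exact Or.inr ⟨h1, h3⟩
    · exact absurd h3 hcyc

theorem acyc_insert {A : Finset (Fin n × Fin n)} {a : Fin n × Fin n}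
    (hA : Acyc A) (hcyc : ¬ rtg A a.2 a.1) : Acyc (insert a A) := by
  classical
  intro v hv
  rcases (Relation.TransGen.head'_iff).mp hv with ⟨c, hstep, hrest⟩
  rcases Finset.mem_insert.mp hstep with hxa | hmem
  · have hv1 : v = a.1 := congrArg Prod.fst hxa
    have hc2 : c = a.2 := congrArg Prod.snd hxa
    subst hv1; subst hc2
    rcases rtg_insert_cases' hcyc hrest with h1 | ⟨h1, _⟩
    · exact hcyc h1
    · exact hcyc h1
  · rcases rtg_insert_cases' hcyc hrest with h1 | ⟨h1, h2⟩
    · exact hA v (Relation.TransGen.head' hmem h1)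
    · -- v → c in A, c ⇝_A a.1, a.2 ⇝_A v : so a.2 ⇝_A a.1, contradiction
      exact hcyc (h2.trans (Relation.ReflTransGen.head hmem h1))

end MFT
namespace MFT
open Finset Relation
variable {n : ℕ}

theorem forest_deg1 {W : Matrix (Fin n) (Fin n) ℝ} {A : Finset (Fin n × Fin n)}
    (h : IsInForest W A) : Deg1 A := h.2.1

theorem forest_acyc {W : Matrix (Fin n) (Fin n) ℝ} {A : Finset (Fin n × Fin n)}
    (h : IsInForest W A) : Acyc A := h.2.2

theorem forest_arc_ne {W : Matrix (Fin n) (Fin n) ℝ} {A : Finset (Fin n × Fin n)}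
    (h : IsInForest W A) {e : Fin n × Fin n} (he : e ∈ A) : e.1 ≠ e.2 :=
  (h.1 e he).1

theorem forest_arc_pos {W : Matrix (Fin n) (Fin n) ℝ} {A : Finset (Fin n × Fin n)}
    (h : IsInForest W A) {e : Fin n × Fin n} (he : e ∈ A) : 0 < W e.1 e.2 :=
  (h.1 e he).2

theorem isInForest_empty (W : Matrix (Fin n) (Fin n) ℝ) : IsInForest W (∅ : Finset (Fin n × Fin n)) := by
  refine ⟨by simp, by simp, ?_⟩
  intro i hi
  rcases (Relation.TransGen.head'_iff).mp hi with ⟨c, hstep, _⟩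
  simp at hstep

theorem isInForest_erase {W : Matrix (Fin n) (Fin n) ℝ} {A : Finset (Fin n × Fin n)}
    (h : IsInForest W A) (a : Fin n × Fin n) : IsInForest W (A.erase a) := by
  classical
  refine ⟨fun e he => h.1 e (Finset.erase_subset _ _ he), fun i => ?_, fun i hi => ?_⟩
  · exact le_trans (Finset.card_le_card (Finset.filter_subset_filter _ (Finset.erase_subset _ _))) (h.2.1 i)
  · exact h.2.2 i (Relation.TransGen.mono (fun a b hab => Finset.erase_subset _ _ hab) _ _ hi)

theorem isRoot_erase {A : Finset (Fin n × Fin n)} (hdeg : Deg1 A) {x y : Fin n}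
    (hxy : (x, y) ∈ A) : IsRoot (A.erase (x, y)) x := by
  classical
  rintro ⟨u, v⟩ he rfl
  simp only [Finset.mem_erase] at he
  exact he.1 (by rw [out_unique hdeg he.2 hxy])

theorem isInForest_insert {W : Matrix (Fin n) (Fin n) ℝ} {A : Finset (Fin n × Fin n)}
    (h : IsInForest W A) {a : Fin n × Fin n} (hne : a.1 ≠ a.2) (hpos : 0 < W a.1 a.2)
    (hroot : IsRoot A a.1) (hcyc : ¬ rtg A a.2 a.1) : IsInForest W (insert a A) := by
  classical
  refine ⟨?_, ?_, acyc_insert h.2.2 hcyc⟩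
  · intro e he
    rcases Finset.mem_insert.mp he with rfl | hmem
    · exact ⟨hne, hpos⟩
    · exact h.1 e hmem
  · intro i
    by_cases hi : i = a.1
    · subst hi
      have : (insert a A).filter (fun e => e.1 = a.1) = {a} := by
        ext e
        simp only [Finset.mem_filter, Finset.mem_insert, Finset.mem_singleton]
        constructor
        · rintro ⟨rfl | hmem, he1⟩
          · rfl
          · exact absurd he1 (hroot _ hmem)
        · rintro rfl; exact ⟨Or.inl rfl, rfl⟩
      rw [this]; simp
    · have : (insert a A).filter (fun e => e.1 = i) = A.filter (fun e => e.1 = i) := by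
        ext e
        simp only [Finset.mem_filter, Finset.mem_insert]
        constructor
        · rintro ⟨rfl | hmem, he1⟩
          · exact absurd he1.symm hi
          · exact ⟨hmem, he1⟩
        · rintro ⟨hmem, he1⟩; exact ⟨Or.inr hmem, he1⟩
      rw [this]; exact h.2.1 i

theorem forestWeight_pos {W : Matrix (Fin n) (Fin n) ℝ} {A : Finset (Fin n × Fin n)}
    (h : IsInForest W A) : 0 < forestWeight W A :=
  Finset.prod_pos (fun e he => (h.1 e he).2)

theorem card_le_of_deg1 {A : Finset (Fin n × Fin n)} (h : Deg1 A) : A.card ≤ n := by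
  classical
  calc A.card = ∑ i : Fin n, (A.filter (fun e => e.1 = i)).card :=
        Finset.card_eq_sum_card_fiberwise (fun e _ => Finset.mem_univ e.1)
    _ ≤ ∑ _i : Fin n, 1 := Finset.sum_le_sum (fun i _ => h i)
    _ = n := by simp

open scoped Classical in
theorem exists_max_forest (W : Matrix (Fin n) (Fin n) ℝ) :
    ∃ A, IsInForest W A ∧ A.card = maxForestCard W := by
  have hne : (Finset.univ.powerset.filter (fun A => IsInForest W A)).Nonempty := by
    refine ⟨∅, ?_⟩
    simp [isInForest_empty]
  obtain ⟨A, hA, hcard⟩ := Finset.exists_mem_eq_sup _ hne Finset.card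
  simp only [Finset.mem_filter] at hA
  exact ⟨A, hA.2, hcard.symm⟩

open scoped Classical in
theorem card_le_maxForestCard {W : Matrix (Fin n) (Fin n) ℝ} {A : Finset (Fin n × Fin n)}
    (h : IsInForest W A) : A.card ≤ maxForestCard W := by
  apply Finset.le_sup (f := Finset.card)
  simp [h]

theorem maxForestCard_le (W : Matrix (Fin n) (Fin n) ℝ) : maxForestCard W ≤ n := by
  obtain ⟨A, hA, hcard⟩ := exists_max_forest W
  rw [← hcard]
  exact card_le_of_deg1 (forest_deg1 hA)

theorem sigmaW_max_pos (W : Matrix (Fin n) (Fin n) ℝ) : 0 < sigmaW W (maxForestCard W) := by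
  classical
  obtain ⟨A, hA, hcard⟩ := exists_max_forest W
  rw [sigmaW]
  apply Finset.sum_pos
  · intro B hB
    simp only [Finset.mem_filter] at hB
    exact forestWeight_pos hB.2.1
  · exact ⟨A, by simp [hA, hcard]⟩

theorem sigmaW_gt_max (W : Matrix (Fin n) (Fin n) ℝ) {k : ℕ} (hk : maxForestCard W < k) :
    sigmaW W k = 0 := by
  classical
  rw [sigmaW]
  apply Finset.sum_eq_zero
  intro A hA
  simp only [Finset.mem_filter] at hA
  exact absurd (hA.2.2 ▸ card_le_maxForestCard hA.2.1) (not_le.mpr hk)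

theorem forestMatrix_gt_max (W : Matrix (Fin n) (Fin n) ℝ) {k : ℕ} (hk : maxForestCard W < k) :
    forestMatrix W k = 0 := by
  classical
  ext i j
  rw [forestMatrix]
  apply Finset.sum_eq_zero
  intro A hA
  simp only [Finset.mem_filter] at hA
  exact absurd (hA.2.2.1 ▸ card_le_maxForestCard hA.2.1) (not_le.mpr hk)

theorem W_eq_zero_of_max_eq_zero {W : Matrix (Fin n) (Fin n) ℝ}
    (hW : ∀ i j, 0 ≤ W i j) (hdiag : ∀ i, W i i = 0)
    (hm : maxForestCard W = 0) : W = 0 := by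
  classical
  ext i j
  by_contra hij
  have hpos : 0 < W i j := lt_of_le_of_ne (hW i j) (by simpa using (Ne.symm hij))
  have hne : i ≠ j := by rintro rfl; rw [hdiag i] at hij; exact hij rfl
  have hforest : IsInForest W {(i, j)} := by
    refine ⟨?_, ?_, ?_⟩
    · rintro e he; simp only [Finset.mem_singleton] at he; subst he; exact ⟨hne, hpos⟩
    · intro x
      exact le_trans (Finset.card_le_card (Finset.filter_subset _ _)) (by simp)
    · intro v hv
      rcases (Relation.TransGen.head'_iff).mp hv with ⟨c, hstep, hrest⟩
      simp only [stp, Finset.mem_singleton, Prod.mk.injEq] at hstep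
      obtain ⟨rfl, rfl⟩ := hstep
      rcases Relation.ReflTransGen.cases_head hrest with rfl | ⟨c', hc', _⟩
      · exact hne rfl
      · simp only [stp, Finset.mem_singleton, Prod.mk.injEq] at hc'
        exact hne hc'.1.symm
  have := card_le_maxForestCard hforest
  rw [hm] at this
  simp at this

end MFT
namespace MFT
open Finset Relation
variable {n : ℕ}

theorem inTree_iff {A : Finset (Fin n × Fin n)} {i j : Fin n} :
    InTreeRootedAt A i j ↔ rtg A i j ∧ IsRoot A j := Iff.rfl

theorem isRoot_mono {A B : Finset (Fin n × Fin n)} (hAB : A ⊆ B) {x : Fin n}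
    (h : IsRoot B x) : IsRoot A x := fun e he => h e (hAB he)

/-- the successor of `j` (target of its unique out-arc), if any -/
noncomputable def firstStep (A : Finset (Fin n × Fin n)) (j : Fin n) : Fin n :=
  if h : ∃ l, (j, l) ∈ A then h.choose else j

theorem firstStep_mem {A : Finset (Fin n × Fin n)} {j : Fin n}
    (h : ∃ l, (j, l) ∈ A) : (j, firstStep A j) ∈ A := by
  rw [firstStep, dif_pos h]
  exact h.choose_spec

theorem firstStep_eq {A : Finset (Fin n × Fin n)} (hdeg : Deg1 A) {j l : Fin n}
    (h : (j, l) ∈ A) : firstStep A j = l :=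
  out_unique hdeg (firstStep_mem ⟨l, h⟩) h

theorem rtg_head_arc {A : Finset (Fin n × Fin n)} (hdeg : Deg1 A) {j s : Fin n}
    (h : rtg A j s) (hne : j ≠ s) :
    (j, firstStep A j) ∈ A ∧ rtg A (firstStep A j) s := by
  rcases Relation.ReflTransGen.cases_head h with rfl | ⟨c, hc, hcs⟩
  · exact absurd rfl hne
  · have := firstStep_eq hdeg hc
    rw [this]
    exact ⟨hc, hcs⟩

open scoped Classical in
/-- the last vertex before `j` on the walk from `l`, if any -/
noncomputable def lastStep (A : Finset (Fin n × Fin n)) (l j : Fin n) : Fin n :=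
  if h : ∃ s, (s, j) ∈ A ∧ rtg A l s then h.choose else l

theorem lastStep_exists {A : Finset (Fin n × Fin n)} {l j : Fin n}
    (h : rtg A l j) (hne : l ≠ j) : ∃ s, (s, j) ∈ A ∧ rtg A l s := by
  rcases Relation.ReflTransGen.cases_tail h with rfl | ⟨c, hlc, hc⟩
  · exact absurd rfl hne
  · exact ⟨c, hc, hlc⟩

theorem lastStep_spec {A : Finset (Fin n × Fin n)} {l j : Fin n}
    (h : ∃ s, (s, j) ∈ A ∧ rtg A l s) :
    (lastStep A l j, j) ∈ A ∧ rtg A l (lastStep A l j) := by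
  classical
  rw [lastStep]
  rw [dif_pos h]
  exact h.choose_spec

/-- uniqueness of the last step towards a root -/
theorem last_unique_root {A : Finset (Fin n × Fin n)} (hdeg : Deg1 A)
    {j : Fin n} (hroot : IsRoot A j) {l s s' : Fin n}
    (hs : (s, j) ∈ A) (hs' : (s', j) ∈ A) (hls : rtg A l s) (hls' : rtg A l s') :
    s = s' := by
  have aux : ∀ {a b : Fin n}, (a, j) ∈ A → (b, j) ∈ A → rtg A a b → a = b := by
    intro a b ha hb hab
    rcases Relation.ReflTransGen.cases_head hab with rfl | ⟨c, hc, hcb⟩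
    · rfl
    · have hcj : c = j := out_unique hdeg hc ha
      rw [hcj] at hcb
      have hjb : j = b := eq_of_isRoot_rtg hroot hcb
      exact absurd hjb.symm (hroot _ hb)
  rcases rtg_total hdeg hls hls' with h | h
  · exact aux hs hs' h
  · exact (aux hs' hs h).symm

/-- uniqueness of the last step in an acyclic graph -/
theorem last_unique_acyc {A : Finset (Fin n × Fin n)} (hdeg : Deg1 A)
    (hacyc : Acyc A) {j l s s' : Fin n}
    (hs : (s, j) ∈ A) (hs' : (s', j) ∈ A) (hls : rtg A l s) (hls' : rtg A l s') :
    s = s' := by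
  have aux : ∀ {a b : Fin n}, (a, j) ∈ A → (b, j) ∈ A → rtg A a b → a = b := by
    intro a b ha hb hab
    rcases Relation.ReflTransGen.cases_head hab with rfl | ⟨c, hc, hcb⟩
    · rfl
    · have hcj : c = j := out_unique hdeg hc ha
      rw [hcj] at hcb
      exact absurd (Relation.TransGen.tail' hcb hb) (hacyc j)
  rcases rtg_total hdeg hls hls' with h | h
  · exact aux hs hs' h
  · exact (aux hs' hs h).symm

theorem lastStep_eq_root {A : Finset (Fin n × Fin n)} (hdeg : Deg1 A)
    {j : Fin n} (hroot : IsRoot A j) {l s : Fin n}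
    (hs : (s, j) ∈ A) (hls : rtg A l s) : lastStep A l j = s := by
  obtain ⟨h1, h2⟩ := lastStep_spec ⟨s, hs, hls⟩
  exact last_unique_root hdeg hroot h1 hs h2 hls

theorem lastStep_eq_acyc {A : Finset (Fin n × Fin n)} (hdeg : Deg1 A)
    (hacyc : Acyc A) {j l s : Fin n}
    (hs : (s, j) ∈ A) (hls : rtg A l s) : lastStep A l j = s := by
  obtain ⟨h1, h2⟩ := lastStep_spec ⟨s, hs, hls⟩
  exact last_unique_acyc hdeg hacyc h1 hs h2 hls

end MFT
namespace MFT
open Finset Relation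
variable {n : ℕ}

open scoped Classical in
/-- forest part of `U1`: attach the new out-arc of the root `j`. -/
theorem bij1 (W : Matrix (Fin n) (Fin n) ℝ) (i j : Fin n) (k : ℕ) :
    ∑ p ∈ ((Finset.univ : Finset (Fin n)) ×ˢ Finset.univ.powerset).filter
        (fun p => (IsInForest W p.2 ∧ p.2.card = k ∧ InTreeRootedAt p.2 i j)
          ∧ 0 < W j p.1 ∧ ¬ rtg p.2 p.1 j),
      W j p.1 * forestWeight W p.2
    = ∑ B ∈ Finset.univ.powerset.filter
        (fun B => (IsInForest W B ∧ B.card = k + 1) ∧ rtg B i j ∧ ¬ IsRoot B j),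
      forestWeight W B := by
  refine Finset.sum_bij' (fun p _ => insert (j, p.1) p.2)
    (fun B _ => (firstStep B j, B.erase (j, firstStep B j))) ?_ ?_ ?_ ?_ ?_
  · -- forward membership
    rintro ⟨l, A⟩ hp
    simp only [Finset.mem_filter, Finset.mem_product, Finset.mem_powerset] at hp ⊢
    obtain ⟨⟨-, -⟩, ⟨hF, hcard, hIT⟩, hpos, hnc⟩ := hp
    obtain ⟨hrtg, hroot⟩ := inTree_iff.mp hIT
    have hlj : l ≠ j := fun h => hnc (h ▸ Relation.ReflTransGen.refl)
    have hnotmem : (j, l) ∉ A := fun h => hroot (j, l) h rfl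
    refine ⟨Finset.subset_univ _, ⟨?_, ?_⟩, ?_, ?_⟩
    · exact isInForest_insert hF (Ne.symm hlj) hpos hroot hnc
    · rw [Finset.card_insert_of_notMem hnotmem, hcard]
    · exact rtg_mono (Finset.subset_insert _ _) hrtg
    · exact fun hr => hr (j, l) (Finset.mem_insert_self _ _) rfl
  · -- backward membership
    rintro B hB
    simp only [Finset.mem_filter, Finset.mem_product, Finset.mem_powerset] at hB ⊢
    obtain ⟨-, ⟨hF, hcard⟩, hij, hnr⟩ := hB
    have hex : ∃ l, (j, l) ∈ B := by
      simp only [IsRoot, not_forall] at hnr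
      obtain ⟨e, he, he1⟩ := hnr
      simp only [not_not] at he1
      exact ⟨e.2, by rwa [← he1, Prod.mk.eta]⟩
    set l := firstStep B j with hl
    have hjl : (j, l) ∈ B := firstStep_mem hex
    refine ⟨⟨Finset.mem_univ _, Finset.subset_univ _⟩, ⟨?_, ?_, ?_⟩, ?_, ?_⟩
    · exact isInForest_erase hF _
    · rw [Finset.card_erase_of_mem hjl, hcard]; simp
    · exact inTree_iff.mpr ⟨rtg_erase_to_source (a := (j, l)) hij, isRoot_erase (forest_deg1 hF) hjl⟩
    · exact forest_arc_pos hF hjl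
    · intro hc
      have : rtg B l j := rtg_mono (Finset.erase_subset _ _) hc
      exact forest_acyc hF j (Relation.TransGen.head' hjl this)
  · -- left inverse
    rintro ⟨l, A⟩ hp
    simp only [Finset.mem_filter, Finset.mem_product, Finset.mem_powerset] at hp
    obtain ⟨⟨-, -⟩, ⟨hF, hcard, hIT⟩, hpos, hnc⟩ := hp
    obtain ⟨hrtg, hroot⟩ := inTree_iff.mp hIT
    have hlj : l ≠ j := fun h => hnc (h ▸ Relation.ReflTransGen.refl)
    have hnotmem : (j, l) ∉ A := fun h => hroot (j, l) h rfl
    have hforest : IsInForest W (insert (j, l) A) :=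
      isInForest_insert hF (Ne.symm hlj) hpos hroot hnc
    have h1 : firstStep (insert (j, l) A) j = l :=
      firstStep_eq (forest_deg1 hforest) (Finset.mem_insert_self _ _)
    simp only [h1, Finset.erase_insert hnotmem]
  · -- right inverse
    rintro B hB
    simp only [Finset.mem_filter, Finset.mem_powerset] at hB
    obtain ⟨-, ⟨hF, hcard⟩, hij, hnr⟩ := hB
    have hex : ∃ l, (j, l) ∈ B := by
      simp only [IsRoot, not_forall] at hnr
      obtain ⟨e, he, he1⟩ := hnr
      simp only [not_not] at he1
      exact ⟨e.2, by rwa [← he1, Prod.mk.eta]⟩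
    have hjl : (j, firstStep B j) ∈ B := firstStep_mem hex
    exact Finset.insert_erase hjl
  · -- weights
    rintro ⟨l, A⟩ hp
    simp only [Finset.mem_filter, Finset.mem_product, Finset.mem_powerset] at hp
    obtain ⟨⟨-, -⟩, ⟨hF, hcard, hIT⟩, hpos, hnc⟩ := hp
    obtain ⟨hrtg, hroot⟩ := inTree_iff.mp hIT
    have hnotmem : (j, l) ∉ A := fun h => hroot (j, l) h rfl
    rw [forestWeight, forestWeight, Finset.prod_insert hnotmem]

end MFT
namespace MFT
open Finset Relation
variable {n : ℕ}

open scoped Classical in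
/-- forest part of `U2`: attach the new in-arc of `j` from the root of `i`'s tree. -/
theorem bij2 (W : Matrix (Fin n) (Fin n) ℝ) (i j : Fin n) (k : ℕ) :
    ∑ p ∈ ((Finset.univ : Finset (Fin n)) ×ˢ Finset.univ.powerset).filter
        (fun p => (IsInForest W p.2 ∧ p.2.card = k ∧ InTreeRootedAt p.2 i p.1)
          ∧ 0 < W p.1 j ∧ ¬ rtg p.2 j p.1),
      W p.1 j * forestWeight W p.2
    = ∑ B ∈ Finset.univ.powerset.filter
        (fun B => (IsInForest W B ∧ B.card = k + 1) ∧ ∃ s, (s, j) ∈ B ∧ rtg B i s),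
      forestWeight W B := by
  refine Finset.sum_bij' (fun p _ => insert (p.1, j) p.2)
    (fun B _ => (lastStep B i j, B.erase (lastStep B i j, j))) ?_ ?_ ?_ ?_ ?_
  · -- forward membership
    rintro ⟨s, A⟩ hp
    simp only [Finset.mem_filter, Finset.mem_product, Finset.mem_powerset] at hp ⊢
    obtain ⟨⟨-, -⟩, ⟨hF, hcard, hIT⟩, hpos, hnc⟩ := hp
    obtain ⟨hrtg, hroot⟩ := inTree_iff.mp hIT
    have hsj : s ≠ j := fun h => hnc (h ▸ Relation.ReflTransGen.refl)
    have hnotmem : (s, j) ∉ A := fun h => hroot (s, j) h rfl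
    refine ⟨Finset.subset_univ _, ⟨?_, ?_⟩, s, ?_, ?_⟩
    · exact isInForest_insert hF hsj hpos hroot hnc
    · rw [Finset.card_insert_of_notMem hnotmem, hcard]
    · exact Finset.mem_insert_self _ _
    · exact rtg_mono (Finset.subset_insert _ _) hrtg
  · -- backward membership
    rintro B hB
    simp only [Finset.mem_filter, Finset.mem_product, Finset.mem_powerset] at hB ⊢
    obtain ⟨-, ⟨hF, hcard⟩, hex⟩ := hB
    obtain ⟨s0, hs0, his0⟩ := hex
    obtain ⟨hmem, hrtg⟩ := lastStep_spec ⟨s0, hs0, his0⟩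
    set s := lastStep B i j with hs
    refine ⟨⟨Finset.mem_univ _, Finset.subset_univ _⟩, ⟨?_, ?_, ?_⟩, ?_, ?_⟩
    · exact isInForest_erase hF _
    · rw [Finset.card_erase_of_mem hmem, hcard]; simp
    · exact inTree_iff.mpr ⟨rtg_erase_to_source (a := (s, j)) hrtg,
        isRoot_erase (forest_deg1 hF) hmem⟩
    · exact forest_arc_pos hF hmem
    · intro hc
      have : rtg B j s := rtg_mono (Finset.erase_subset _ _) hc
      exact forest_acyc hF j (Relation.TransGen.tail' this hmem)
  · -- left inverse
    rintro ⟨s, A⟩ hp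
    simp only [Finset.mem_filter, Finset.mem_product, Finset.mem_powerset] at hp
    obtain ⟨⟨-, -⟩, ⟨hF, hcard, hIT⟩, hpos, hnc⟩ := hp
    obtain ⟨hrtg, hroot⟩ := inTree_iff.mp hIT
    have hsj : s ≠ j := fun h => hnc (h ▸ Relation.ReflTransGen.refl)
    have hnotmem : (s, j) ∉ A := fun h => hroot (s, j) h rfl
    have hforest : IsInForest W (insert (s, j) A) :=
      isInForest_insert hF hsj hpos hroot hnc
    have h1 : lastStep (insert (s, j) A) i j = s :=
      lastStep_eq_acyc (forest_deg1 hforest) (forest_acyc hforest)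
        (Finset.mem_insert_self _ _) (rtg_mono (Finset.subset_insert _ _) hrtg)
    simp only [h1, Finset.erase_insert hnotmem]
  · -- right inverse
    rintro B hB
    simp only [Finset.mem_filter, Finset.mem_powerset] at hB
    obtain ⟨-, ⟨hF, hcard⟩, s0, hs0, his0⟩ := hB
    obtain ⟨hmem, hrtg⟩ := lastStep_spec ⟨s0, hs0, his0⟩
    exact Finset.insert_erase hmem
  · -- weights
    rintro ⟨s, A⟩ hp
    simp only [Finset.mem_filter, Finset.mem_product, Finset.mem_powerset] at hp
    obtain ⟨⟨-, -⟩, ⟨hF, hcard, hIT⟩, hpos, hnc⟩ := hp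
    obtain ⟨hrtg, hroot⟩ := inTree_iff.mp hIT
    have hnotmem : (s, j) ∉ A := fun h => hroot (s, j) h rfl
    rw [forestWeight, forestWeight, Finset.prod_insert hnotmem]

end MFT
namespace MFT
open Finset Relation
variable {n : ℕ}

open scoped Classical in
/-- cyclic parts of `U1` and `U2` cancel: swap the arc closing the cycle. -/
theorem bij3 (W : Matrix (Fin n) (Fin n) ℝ) (hdiag : ∀ i, W i i = 0) (i j : Fin n) (k : ℕ) :
    ∑ p ∈ ((Finset.univ : Finset (Fin n)) ×ˢ Finset.univ.powerset).filter
        (fun p => (IsInForest W p.2 ∧ p.2.card = k ∧ InTreeRootedAt p.2 i j)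
          ∧ 0 < W j p.1 ∧ rtg p.2 p.1 j),
      W j p.1 * forestWeight W p.2
    = ∑ q ∈ ((Finset.univ : Finset (Fin n)) ×ˢ Finset.univ.powerset).filter
        (fun q => (IsInForest W q.2 ∧ q.2.card = k ∧ InTreeRootedAt q.2 i q.1)
          ∧ 0 < W q.1 j ∧ rtg q.2 j q.1),
      W q.1 j * forestWeight W q.2 := by
  refine Finset.sum_bij'
    (fun p _ => (lastStep p.2 p.1 j, insert (j, p.1) (p.2.erase (lastStep p.2 p.1 j, j))))
    (fun q _ => (firstStep q.2 j, insert (q.1, j) (q.2.erase (j, firstStep q.2 j))))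
    ?_ ?_ ?_ ?_ ?_
  · -- forward membership
    rintro ⟨l, A⟩ hp
    simp only [Finset.mem_filter, Finset.mem_product, Finset.mem_powerset] at hp ⊢
    obtain ⟨⟨-, -⟩, ⟨hF, hcard, hIT⟩, hpos, hc⟩ := hp
    obtain ⟨hrtg, hroot⟩ := inTree_iff.mp hIT
    have hlj : l ≠ j := fun h => by rw [h, hdiag] at hpos; exact lt_irrefl 0 hpos
    obtain ⟨hsjA, hls⟩ := lastStep_spec (lastStep_exists hc hlj)
    set s := lastStep A l j with hs
    have hsj : s ≠ j := hroot _ hsjA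
    have hF'' : IsInForest W (A.erase (s, j)) := isInForest_erase hF _
    have hroot''s : IsRoot (A.erase (s, j)) s := isRoot_erase (forest_deg1 hF) hsjA
    have hroot''j : IsRoot (A.erase (s, j)) j := isRoot_mono (Finset.erase_subset _ _) hroot
    have hjlA'' : (j, l) ∉ A.erase (s, j) := fun h => hroot''j _ h rfl
    have hls'' : rtg (A.erase (s, j)) l s := rtg_erase_to_source (a := (s, j)) hls
    have hncyc : ¬ rtg (A.erase (s, j)) l j := by
      intro h
      obtain ⟨c, hcjA'', hlc''⟩ := lastStep_exists h hlj
      have hcs : c = s := last_unique_root (forest_deg1 hF) hroot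
        (Finset.erase_subset _ _ hcjA'') hsjA (rtg_mono (Finset.erase_subset _ _) hlc'') hls
      exact (Finset.mem_erase.mp hcjA'').1 (by rw [hcs])
    have hFA' : IsInForest W (insert (j, l) (A.erase (s, j))) :=
      isInForest_insert hF'' (Ne.symm hlj) hpos hroot''j hncyc
    have hk1 : 1 ≤ k := hcard ▸ Finset.card_pos.mpr ⟨(s, j), hsjA⟩
    refine ⟨⟨Finset.mem_univ _, Finset.subset_univ _⟩, ⟨hFA', ?_, ?_⟩, ?_, ?_⟩
    · rw [Finset.card_insert_of_notMem hjlA'', Finset.card_erase_of_mem hsjA, hcard]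
      omega
    · refine inTree_iff.mpr ⟨?_, ?_⟩
      · rcases rtg_erase_cases (a := (s, j)) hrtg with h1 | ⟨h1, h2⟩
        · exact (rtg_mono (Finset.subset_insert _ _) h1).trans
            (Relation.ReflTransGen.head (Finset.mem_insert_self _ _)
              (rtg_mono (Finset.subset_insert _ _) hls''))
        · exact rtg_mono (Finset.subset_insert _ _) h1
      · intro e he
        rcases Finset.mem_insert.mp he with rfl | hmem
        · exact Ne.symm hsj
        · exact hroot''s _ hmem
    · exact forest_arc_pos hF hsjA
    · exact Relation.ReflTransGen.head (Finset.mem_insert_self _ _)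
        (rtg_mono (Finset.subset_insert _ _) hls'')
  · -- backward membership
    rintro ⟨s, A'⟩ hq
    simp only [Finset.mem_filter, Finset.mem_product, Finset.mem_powerset] at hq ⊢
    obtain ⟨⟨-, -⟩, ⟨hF', hcard', hIT'⟩, hpos', hc'⟩ := hq
    obtain ⟨hrtg', hroot'⟩ := inTree_iff.mp hIT'
    have hsj : s ≠ j := fun h => by rw [h, hdiag] at hpos'; exact lt_irrefl 0 hpos'
    obtain ⟨hjlA', hls'⟩ := rtg_head_arc (forest_deg1 hF') hc' (Ne.symm hsj)
    set l := firstStep A' j with hl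
    have hlj : l ≠ j := Ne.symm (forest_arc_ne hF' hjlA')
    have hF''' : IsInForest W (A'.erase (j, l)) := isInForest_erase hF' _
    have hroot'''j : IsRoot (A'.erase (j, l)) j := isRoot_erase (forest_deg1 hF') hjlA'
    have hroot'''s : IsRoot (A'.erase (j, l)) s := isRoot_mono (Finset.erase_subset _ _) hroot'
    have hsjA''' : (s, j) ∉ A'.erase (j, l) := fun h => hroot' _ (Finset.erase_subset _ _ h) rfl
    have hncyc''' : ¬ rtg (A'.erase (j, l)) j s :=
      fun h => hsj (eq_of_isRoot_rtg hroot'''j h).symm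
    have hls''' : rtg (A'.erase (j, l)) l s := by
      rcases rtg_erase_cases (a := (j, l)) hls' with h1 | ⟨h1, h2⟩
      · exact h1
      · exact absurd (Relation.TransGen.tail' (rtg_mono (Finset.erase_subset _ _) h1) hjlA')
          (forest_acyc hF' l)
    have hFA : IsInForest W (insert (s, j) (A'.erase (j, l))) :=
      isInForest_insert hF''' hsj hpos' hroot'''s hncyc'''
    have hk1 : 1 ≤ k := hcard' ▸ Finset.card_pos.mpr ⟨(j, l), hjlA'⟩
    refine ⟨⟨Finset.mem_univ _, Finset.subset_univ _⟩, ⟨hFA, ?_, ?_⟩, ?_, ?_⟩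
    · rw [Finset.card_insert_of_notMem hsjA''', Finset.card_erase_of_mem hjlA', hcard']
      omega
    · refine inTree_iff.mpr ⟨?_, ?_⟩
      · rcases rtg_erase_cases (a := (j, l)) hrtg' with h1 | ⟨h1, h2⟩
        · exact Relation.ReflTransGen.tail (rtg_mono (Finset.subset_insert _ _) h1)
            (Finset.mem_insert_self _ _)
        · exact rtg_mono (Finset.subset_insert _ _) h1
      · intro e he
        rcases Finset.mem_insert.mp he with rfl | hmem
        · exact hsj
        · exact hroot'''j _ hmem
    · exact forest_arc_pos hF' hjlA'
    · exact Relation.ReflTransGen.tail (rtg_mono (Finset.subset_insert _ _) hls''')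
        (Finset.mem_insert_self _ _)
  · -- left inverse
    rintro ⟨l, A⟩ hp
    simp only [Finset.mem_filter, Finset.mem_product, Finset.mem_powerset] at hp
    obtain ⟨⟨-, -⟩, ⟨hF, hcard, hIT⟩, hpos, hc⟩ := hp
    obtain ⟨hrtg, hroot⟩ := inTree_iff.mp hIT
    have hlj : l ≠ j := fun h => by rw [h, hdiag] at hpos; exact lt_irrefl 0 hpos
    obtain ⟨hsjA, hls⟩ := lastStep_spec (lastStep_exists hc hlj)
    set s := lastStep A l j with hs
    have hroot''j : IsRoot (A.erase (s, j)) j := isRoot_mono (Finset.erase_subset _ _) hroot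
    have hjlA'' : (j, l) ∉ A.erase (s, j) := fun h => hroot''j _ h rfl
    have hls'' : rtg (A.erase (s, j)) l s := rtg_erase_to_source (a := (s, j)) hls
    have hncyc : ¬ rtg (A.erase (s, j)) l j := by
      intro h
      obtain ⟨c, hcjA'', hlc''⟩ := lastStep_exists h hlj
      have hcs : c = s := last_unique_root (forest_deg1 hF) hroot
        (Finset.erase_subset _ _ hcjA'') hsjA (rtg_mono (Finset.erase_subset _ _) hlc'') hls
      exact (Finset.mem_erase.mp hcjA'').1 (by rw [hcs])
    have hF'' : IsInForest W (A.erase (s, j)) := isInForest_erase hF _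
    have hFA' : IsInForest W (insert (j, l) (A.erase (s, j))) :=
      isInForest_insert hF'' (Ne.symm hlj) hpos hroot''j hncyc
    have h1 : firstStep (insert (j, l) (A.erase (s, j))) j = l :=
      firstStep_eq (forest_deg1 hFA') (Finset.mem_insert_self _ _)
    simp only [h1, Finset.erase_insert hjlA'', Finset.insert_erase hsjA]
  · -- right inverse
    rintro ⟨s, A'⟩ hq
    simp only [Finset.mem_filter, Finset.mem_product, Finset.mem_powerset] at hq
    obtain ⟨⟨-, -⟩, ⟨hF', hcard', hIT'⟩, hpos', hc'⟩ := hq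
    obtain ⟨hrtg', hroot'⟩ := inTree_iff.mp hIT'
    have hsj : s ≠ j := fun h => by rw [h, hdiag] at hpos'; exact lt_irrefl 0 hpos'
    obtain ⟨hjlA', hls'⟩ := rtg_head_arc (forest_deg1 hF') hc' (Ne.symm hsj)
    set l := firstStep A' j with hl
    have hF''' : IsInForest W (A'.erase (j, l)) := isInForest_erase hF' _
    have hroot'''j : IsRoot (A'.erase (j, l)) j := isRoot_erase (forest_deg1 hF') hjlA'
    have hroot'''s : IsRoot (A'.erase (j, l)) s := isRoot_mono (Finset.erase_subset _ _) hroot'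
    have hsjA''' : (s, j) ∉ A'.erase (j, l) := fun h => hroot' _ (Finset.erase_subset _ _ h) rfl
    have hncyc''' : ¬ rtg (A'.erase (j, l)) j s :=
      fun h => hsj (eq_of_isRoot_rtg hroot'''j h).symm
    have hls''' : rtg (A'.erase (j, l)) l s := by
      rcases rtg_erase_cases (a := (j, l)) hls' with h1 | ⟨h1, h2⟩
      · exact h1
      · exact absurd (Relation.TransGen.tail' (rtg_mono (Finset.erase_subset _ _) h1) hjlA')
          (forest_acyc hF' l)
    have hFA : IsInForest W (insert (s, j) (A'.erase (j, l))) :=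
      isInForest_insert hF''' hsj hpos' hroot'''s hncyc'''
    have hrootAj : IsRoot (insert (s, j) (A'.erase (j, l))) j := by
      intro e he
      rcases Finset.mem_insert.mp he with rfl | hmem
      · exact hsj
      · exact hroot'''j _ hmem
    have h1 : lastStep (insert (s, j) (A'.erase (j, l))) l j = s :=
      lastStep_eq_root (forest_deg1 hFA) hrootAj (Finset.mem_insert_self _ _)
        (rtg_mono (Finset.subset_insert _ _) hls''')
    simp only [h1, Finset.erase_insert hsjA''', Finset.insert_erase hjlA']
  · -- weights
    rintro ⟨l, A⟩ hp
    simp only [Finset.mem_filter, Finset.mem_product, Finset.mem_powerset] at hp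
    obtain ⟨⟨-, -⟩, ⟨hF, hcard, hIT⟩, hpos, hc⟩ := hp
    obtain ⟨hrtg, hroot⟩ := inTree_iff.mp hIT
    have hlj : l ≠ j := fun h => by rw [h, hdiag] at hpos; exact lt_irrefl 0 hpos
    obtain ⟨hsjA, hls⟩ := lastStep_spec (lastStep_exists hc hlj)
    set s := lastStep A l j with hs
    have hroot''j : IsRoot (A.erase (s, j)) j := isRoot_mono (Finset.erase_subset _ _) hroot
    have hjlA'' : (j, l) ∉ A.erase (s, j) := fun h => hroot''j _ h rfl
    rw [forestWeight, forestWeight, Finset.prod_insert hjlA'',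
      ← Finset.mul_prod_erase A _ hsjA]
    ring
end MFT
namespace MFT
open Finset Relation
variable {n : ℕ}

open scoped Classical in
theorem sum_pairs (q : Fin n → Finset (Fin n × Fin n) → Prop)
    (f : Fin n → Finset (Fin n × Fin n) → ℝ) :
    ∑ p ∈ ((Finset.univ : Finset (Fin n)) ×ˢ Finset.univ.powerset).filter
        (fun p => q p.1 p.2), f p.1 p.2
    = ∑ l : Fin n, ∑ A ∈ Finset.univ.powerset.filter (q l), f l A := by
  rw [Finset.sum_filter, Finset.sum_product]
  simp [Finset.sum_filter]

open scoped Classical in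
theorem pairs1a (W : Matrix (Fin n) (Fin n) ℝ) (i j : Fin n) (k : ℕ) :
    ∑ p ∈ ((Finset.univ : Finset (Fin n)) ×ˢ Finset.univ.powerset).filter
        (fun p => (IsInForest W p.2 ∧ p.2.card = k ∧ InTreeRootedAt p.2 i j)
          ∧ 0 < W j p.1 ∧ ¬ rtg p.2 p.1 j),
      W j p.1 * forestWeight W p.2
    = ∑ l : Fin n, ∑ A ∈ Finset.univ.powerset.filter
        (fun A => (IsInForest W A ∧ A.card = k ∧ InTreeRootedAt A i j)
          ∧ 0 < W j l ∧ ¬ rtg A l j), W j l * forestWeight W A := by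
  rw [Finset.sum_filter, Finset.sum_product]
  simp [Finset.sum_filter]

open scoped Classical in
theorem pairs1b (W : Matrix (Fin n) (Fin n) ℝ) (i j : Fin n) (k : ℕ) :
    ∑ p ∈ ((Finset.univ : Finset (Fin n)) ×ˢ Finset.univ.powerset).filter
        (fun p => (IsInForest W p.2 ∧ p.2.card = k ∧ InTreeRootedAt p.2 i j)
          ∧ 0 < W j p.1 ∧ rtg p.2 p.1 j),
      W j p.1 * forestWeight W p.2
    = ∑ l : Fin n, ∑ A ∈ Finset.univ.powerset.filter
        (fun A => (IsInForest W A ∧ A.card = k ∧ InTreeRootedAt A i j)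
          ∧ 0 < W j l ∧ rtg A l j), W j l * forestWeight W A := by
  rw [Finset.sum_filter, Finset.sum_product]
  simp [Finset.sum_filter]

open scoped Classical in
theorem pairs2a (W : Matrix (Fin n) (Fin n) ℝ) (i j : Fin n) (k : ℕ) :
    ∑ p ∈ ((Finset.univ : Finset (Fin n)) ×ˢ Finset.univ.powerset).filter
        (fun p => (IsInForest W p.2 ∧ p.2.card = k ∧ InTreeRootedAt p.2 i p.1)
          ∧ 0 < W p.1 j ∧ ¬ rtg p.2 j p.1),
      W p.1 j * forestWeight W p.2
    = ∑ s : Fin n, ∑ A ∈ Finset.univ.powerset.filter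
        (fun A => (IsInForest W A ∧ A.card = k ∧ InTreeRootedAt A i s)
          ∧ 0 < W s j ∧ ¬ rtg A j s), W s j * forestWeight W A := by
  rw [Finset.sum_filter, Finset.sum_product]
  simp [Finset.sum_filter]

open scoped Classical in
theorem pairs2b (W : Matrix (Fin n) (Fin n) ℝ) (i j : Fin n) (k : ℕ) :
    ∑ p ∈ ((Finset.univ : Finset (Fin n)) ×ˢ Finset.univ.powerset).filter
        (fun p => (IsInForest W p.2 ∧ p.2.card = k ∧ InTreeRootedAt p.2 i p.1)
          ∧ 0 < W p.1 j ∧ rtg p.2 j p.1),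
      W p.1 j * forestWeight W p.2
    = ∑ s : Fin n, ∑ A ∈ Finset.univ.powerset.filter
        (fun A => (IsInForest W A ∧ A.card = k ∧ InTreeRootedAt A i s)
          ∧ 0 < W s j ∧ rtg A j s), W s j * forestWeight W A := by
  rw [Finset.sum_filter, Finset.sum_product]
  simp [Finset.sum_filter]


open scoped Classical in
theorem splitU1 (W : Matrix (Fin n) (Fin n) ℝ) (hW : ∀ a b, 0 ≤ W a b)
    (i j : Fin n) (k : ℕ) :
    (∑ l : Fin n, ∑ A ∈ Finset.univ.powerset.filter
        (fun A => (IsInForest W A ∧ A.card = k ∧ InTreeRootedAt A i j)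
          ∧ 0 < W j l ∧ ¬ rtg A l j), W j l * forestWeight W A)
    + (∑ l : Fin n, ∑ A ∈ Finset.univ.powerset.filter
        (fun A => (IsInForest W A ∧ A.card = k ∧ InTreeRootedAt A i j)
          ∧ 0 < W j l ∧ rtg A l j), W j l * forestWeight W A)
    = ∑ l : Fin n, ∑ A ∈ Finset.univ.powerset.filter
        (fun A => IsInForest W A ∧ A.card = k ∧ InTreeRootedAt A i j),
        W j l * forestWeight W A := by
  rw [← Finset.sum_add_distrib]
  refine Finset.sum_congr rfl (fun l _ => ?_)
  rw [Finset.sum_filter, Finset.sum_filter, Finset.sum_filter, ← Finset.sum_add_distrib]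
  refine Finset.sum_congr rfl (fun A _ => ?_)
  by_cases hC : IsInForest W A ∧ A.card = k ∧ InTreeRootedAt A i j
  · by_cases hpos : 0 < W j l
    · by_cases hr : rtg A l j <;> simp [hC, hpos, hr]
    · have h0 : W j l = 0 := le_antisymm (not_lt.mp hpos) (hW j l)
      simp [hC, hpos, h0]
  · simp [hC]

open scoped Classical in
theorem splitU2 (W : Matrix (Fin n) (Fin n) ℝ) (hW : ∀ a b, 0 ≤ W a b)
    (i j : Fin n) (k : ℕ) :
    (∑ s : Fin n, ∑ A ∈ Finset.univ.powerset.filter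
        (fun A => (IsInForest W A ∧ A.card = k ∧ InTreeRootedAt A i s)
          ∧ 0 < W s j ∧ ¬ rtg A j s), W s j * forestWeight W A)
    + (∑ s : Fin n, ∑ A ∈ Finset.univ.powerset.filter
        (fun A => (IsInForest W A ∧ A.card = k ∧ InTreeRootedAt A i s)
          ∧ 0 < W s j ∧ rtg A j s), W s j * forestWeight W A)
    = ∑ s : Fin n, ∑ A ∈ Finset.univ.powerset.filter
        (fun A => IsInForest W A ∧ A.card = k ∧ InTreeRootedAt A i s),
        W s j * forestWeight W A := by
  rw [← Finset.sum_add_distrib]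
  refine Finset.sum_congr rfl (fun s _ => ?_)
  rw [Finset.sum_filter, Finset.sum_filter, Finset.sum_filter, ← Finset.sum_add_distrib]
  refine Finset.sum_congr rfl (fun A _ => ?_)
  by_cases hC : IsInForest W A ∧ A.card = k ∧ InTreeRootedAt A i s
  · by_cases hpos : 0 < W s j
    · by_cases hr : rtg A j s <;> simp [hC, hpos, hr]
    · have h0 : W s j = 0 := le_antisymm (not_lt.mp hpos) (hW s j)
      simp [hC, hpos, h0]
  · simp [hC]

open scoped Classical in
theorem sumS1 (W : Matrix (Fin n) (Fin n) ℝ) (i j : Fin n) (k : ℕ) :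
    (∑ B ∈ Finset.univ.powerset.filter
        (fun B => (IsInForest W B ∧ B.card = k + 1) ∧ rtg B i j ∧ ¬ IsRoot B j),
      forestWeight W B)
    + (∑ B ∈ Finset.univ.powerset.filter
        (fun B => IsInForest W B ∧ B.card = k + 1 ∧ InTreeRootedAt B i j),
      forestWeight W B)
    = ∑ B ∈ Finset.univ.powerset.filter
        (fun B => (IsInForest W B ∧ B.card = k + 1) ∧ rtg B i j),
      forestWeight W B := by
  rw [Finset.sum_filter, Finset.sum_filter, Finset.sum_filter, ← Finset.sum_add_distrib]
  refine Finset.sum_congr rfl (fun B _ => ?_)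
  by_cases h1 : IsInForest W B
  · by_cases h2 : B.card = k + 1
    · by_cases h3 : rtg B i j
      · by_cases h4 : IsRoot B j <;> simp [h1, h2, h3, h4, inTree_iff]
      · simp [h1, h2, h3, inTree_iff]
    · simp [h2]
  · simp [h1]

open scoped Classical in
theorem sumS2 (W : Matrix (Fin n) (Fin n) ℝ) (i j : Fin n) (k : ℕ) :
    ∑ B ∈ Finset.univ.powerset.filter
        (fun B => (IsInForest W B ∧ B.card = k + 1) ∧ rtg B i j),
      forestWeight W B
    = (∑ B ∈ Finset.univ.powerset.filter
        (fun B => (IsInForest W B ∧ B.card = k + 1) ∧ ∃ s, (s, j) ∈ B ∧ rtg B i s),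
      forestWeight W B)
    + (if i = j then sigmaW W (k + 1) else 0) := by
  by_cases hij : i = j
  · subst hij
    rw [if_pos rfl, sigmaW]
    have h2 : (∑ B ∈ Finset.univ.powerset.filter
        (fun B => (IsInForest W B ∧ B.card = k + 1) ∧ ∃ s, (s, i) ∈ B ∧ rtg B i s),
        forestWeight W B) = 0 := by
      rw [Finset.sum_filter]
      refine Finset.sum_eq_zero (fun B _ => ?_)
      rw [if_neg]
      rintro ⟨⟨hF, -⟩, s, hsB, his⟩
      exact forest_acyc hF i (Relation.TransGen.tail' his hsB)
    rw [h2, zero_add]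
    refine Finset.sum_congr (Finset.filter_congr (fun B _ => ?_)) (fun _ _ => rfl)
    simp [Relation.ReflTransGen.refl, and_assoc]
  · rw [if_neg hij, add_zero]
    refine Finset.sum_congr (Finset.filter_congr (fun B _ => ?_)) (fun _ _ => rfl)
    refine and_congr_right (fun _ => ⟨fun h => ?_, fun ⟨s, hsB, his⟩ => his.tail hsB⟩)
    rcases Relation.ReflTransGen.cases_tail h with h' | ⟨c, hic, hcj⟩
    · exact absurd h'.symm hij
    · exact ⟨c, hcj, hic⟩

open scoped Classical in
set_option maxHeartbeats 1000000 in
/-- The key combinatorial identity behind `Q_k L = σ_{k+1} I − Q_{k+1}`. -/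
theorem keyIdentity (W : Matrix (Fin n) (Fin n) ℝ) (hW : ∀ a b, 0 ≤ W a b)
    (hdiag : ∀ a, W a a = 0) (i j : Fin n) (k : ℕ) :
    (∑ A ∈ Finset.univ.powerset.filter
        (fun A => IsInForest W A ∧ A.card = k ∧ InTreeRootedAt A i j),
      (∑ l : Fin n, W j l) * forestWeight W A)
    + (∑ B ∈ Finset.univ.powerset.filter
        (fun B => IsInForest W B ∧ B.card = k + 1 ∧ InTreeRootedAt B i j),
      forestWeight W B)
    = (∑ s : Fin n, ∑ A ∈ Finset.univ.powerset.filter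
        (fun A => IsInForest W A ∧ A.card = k ∧ InTreeRootedAt A i s),
      W s j * forestWeight W A)
    + (if i = j then sigmaW W (k + 1) else 0) := by
  have eA : (∑ A ∈ Finset.univ.powerset.filter
        (fun A => IsInForest W A ∧ A.card = k ∧ InTreeRootedAt A i j),
      (∑ l : Fin n, W j l) * forestWeight W A)
      = ∑ l : Fin n, ∑ A ∈ Finset.univ.powerset.filter
        (fun A => IsInForest W A ∧ A.card = k ∧ InTreeRootedAt A i j),
        W j l * forestWeight W A := by
    rw [Finset.sum_comm]
    refine Finset.sum_congr rfl (fun A _ => ?_)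
    rw [Finset.sum_mul]
  have hb1 : (∑ l : Fin n, ∑ A ∈ Finset.univ.powerset.filter
        (fun A => (IsInForest W A ∧ A.card = k ∧ InTreeRootedAt A i j)
          ∧ 0 < W j l ∧ ¬ rtg A l j), W j l * forestWeight W A)
      = ∑ B ∈ Finset.univ.powerset.filter
        (fun B => (IsInForest W B ∧ B.card = k + 1) ∧ rtg B i j ∧ ¬ IsRoot B j),
      forestWeight W B :=
    Eq.trans (Eq.symm (pairs1a W i j k)) (bij1 W i j k)
  have hb2 : (∑ s : Fin n, ∑ A ∈ Finset.univ.powerset.filter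
        (fun A => (IsInForest W A ∧ A.card = k ∧ InTreeRootedAt A i s)
          ∧ 0 < W s j ∧ ¬ rtg A j s), W s j * forestWeight W A)
      = ∑ B ∈ Finset.univ.powerset.filter
        (fun B => (IsInForest W B ∧ B.card = k + 1) ∧ ∃ s, (s, j) ∈ B ∧ rtg B i s),
      forestWeight W B :=
    Eq.trans (Eq.symm (pairs2a W i j k)) (bij2 W i j k)
  have hb3 : (∑ l : Fin n, ∑ A ∈ Finset.univ.powerset.filter
        (fun A => (IsInForest W A ∧ A.card = k ∧ InTreeRootedAt A i j)
          ∧ 0 < W j l ∧ rtg A l j), W j l * forestWeight W A)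
      = ∑ s : Fin n, ∑ A ∈ Finset.univ.powerset.filter
        (fun A => (IsInForest W A ∧ A.card = k ∧ InTreeRootedAt A i s)
          ∧ 0 < W s j ∧ rtg A j s), W s j * forestWeight W A :=
    Eq.trans (Eq.symm (pairs1b W i j k))
      (Eq.trans (bij3 W hdiag i j k) (pairs2b W i j k))
  rw [eA, ← splitU1 W hW i j k, ← splitU2 W hW i j k, hb1, hb2, hb3]
  have := sumS1 W i j k
  have := sumS2 W i j k
  linarith

end MFT
namespace MFT
open Finset Relation
variable {n : ℕ}

open scoped Classical in
theorem rec2 (W : Matrix (Fin n) (Fin n) ℝ) (hW : ∀ a b, 0 ≤ W a b)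
    (hdiag : ∀ a, W a a = 0) (k : ℕ) :
    forestMatrix W k * lap W
      = sigmaW W (k + 1) • (1 : Matrix (Fin n) (Fin n) ℝ) - forestMatrix W (k + 1) := by
  ext i j
  have key := keyIdentity W hW hdiag i j k
  simp only [Matrix.mul_apply, Matrix.sub_apply, Matrix.smul_apply, Matrix.one_apply,
    lap, Matrix.diagonal_apply, forestMatrix, Matrix.of_apply, smul_eq_mul]
  have e1 : ∀ s : Fin n,
      (∑ A ∈ Finset.univ.powerset.filter
        (fun A => IsInForest W A ∧ A.card = k ∧ InTreeRootedAt A i s), forestWeight W A)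
        * ((if s = j then ∑ l, W s l else 0) - W s j)
      = (if s = j then (∑ A ∈ Finset.univ.powerset.filter
          (fun A => IsInForest W A ∧ A.card = k ∧ InTreeRootedAt A i j),
            (∑ l, W j l) * forestWeight W A) else 0)
        - ∑ A ∈ Finset.univ.powerset.filter
            (fun A => IsInForest W A ∧ A.card = k ∧ InTreeRootedAt A i s),
            W s j * forestWeight W A := by
    intro s
    by_cases hs : s = j
    · subst hs
      simp [mul_sub, Finset.mul_sum, Finset.sum_mul, mul_comm]
    · simp [hs, Finset.mul_sum, mul_comm]
  rw [Finset.sum_congr rfl (fun s _ => e1 s), Finset.sum_sub_distrib,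
    Finset.sum_ite_eq' Finset.univ j]
  simp only [Finset.mem_univ, if_pos]
  have e2 : sigmaW W (k + 1) * (if i = j then (1 : ℝ) else 0)
      = if i = j then sigmaW W (k + 1) else 0 := by
    by_cases hij : i = j <;> simp [hij]
  rw [e2]
  linarith [key]

theorem rec2_max_zero (W : Matrix (Fin n) (Fin n) ℝ) (hW : ∀ a b, 0 ≤ W a b)
    (hdiag : ∀ a, W a a = 0) :
    forestMatrix W (maxForestCard W) * lap W = 0 := by
  have h := rec2 W hW hdiag (maxForestCard W)
  rw [sigmaW_gt_max W (lt_add_one _), forestMatrix_gt_max W (lt_add_one _)] at h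
  simpa using h

end MFT
namespace MFT
open Finset Relation
variable {n : ℕ}

open scoped Classical in
theorem roots_card {A : Finset (Fin n × Fin n)} (h : Deg1 A) :
    (Finset.univ.filter (fun i : Fin n => IsRoot A i)).card = n - A.card := by
  have hsum : A.card = ∑ i : Fin n, (A.filter (fun e => e.1 = i)).card :=
    Finset.card_eq_sum_card_fiberwise (fun e _ => Finset.mem_univ e.1)
  have hroot_iff : ∀ i : Fin n, IsRoot A i ↔ (A.filter (fun e => e.1 = i)).card = 0 := by
    intro i
    rw [Finset.card_eq_zero, Finset.filter_eq_empty_iff]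
    exact ⟨fun hr e he => hr e he, fun hr e he => hr he⟩
  have hcards : (Finset.univ.filter (fun i : Fin n => IsRoot A i)).card + A.card = n := by
    rw [Finset.card_filter, hsum, ← Finset.sum_add_distrib]
    have : ∀ i : Fin n,
        (if IsRoot A i then 1 else 0) + (A.filter (fun e => e.1 = i)).card = 1 := by
      intro i
      have h1 := h i
      by_cases hr : IsRoot A i
      · rw [if_pos hr, (hroot_iff i).mp hr]
      · rw [if_neg hr]
        have : (A.filter (fun e => e.1 = i)).card ≠ 0 := fun hc => hr ((hroot_iff i).mpr hc)
        omega
    rw [Finset.sum_congr rfl (fun i _ => this i)]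
    simp
  omega

open scoped Classical in
theorem trace_forestMatrix (W : Matrix (Fin n) (Fin n) ℝ) (k : ℕ) :
    (forestMatrix W k).trace = ((n - k : ℕ) : ℝ) * sigmaW W k := by
  rw [Matrix.trace, sigmaW]
  simp only [Matrix.diag, forestMatrix, Matrix.of_apply]
  rw [Finset.mul_sum]
  have e1 : ∀ i : Fin n, (∑ A ∈ Finset.univ.powerset.filter
      (fun A => IsInForest W A ∧ A.card = k ∧ InTreeRootedAt A i i), forestWeight W A)
      = ∑ A ∈ Finset.univ.powerset.filter (fun A => IsInForest W A ∧ A.card = k),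
          (if IsRoot A i then forestWeight W A else 0) := by
    intro i
    rw [Finset.sum_filter, Finset.sum_filter]
    refine Finset.sum_congr rfl (fun A _ => ?_)
    by_cases h1 : IsInForest W A
    · by_cases h2 : A.card = k
      · by_cases h3 : IsRoot A i
        · simp [h1, h2, h3, inTree_iff, Relation.ReflTransGen.refl]
        · simp [h1, h2, h3, inTree_iff]
      · simp [h1, h2]
    · simp [h1]
  rw [Finset.sum_congr rfl (fun i _ => e1 i), Finset.sum_comm]
  refine Finset.sum_congr rfl (fun A hA => ?_)
  simp only [Finset.mem_filter] at hA
  rw [← Finset.sum_filter, Finset.sum_const, roots_card (forest_deg1 hA.2.1), hA.2.2]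
  simp [mul_comm]

theorem rank_eq_trace_idem (P : Matrix (Fin n) (Fin n) ℝ) (h : P * P = P) :
    (P.rank : ℝ) = P.trace := by
  have hcomp : P.mulVecLin ∘ₗ P.mulVecLin = P.mulVecLin := by
    rw [← Matrix.mulVecLin_mul, h]
  have hproj : LinearMap.IsProj (LinearMap.range P.mulVecLin) P.mulVecLin := by
    refine ⟨fun x => LinearMap.mem_range_self _ x, ?_⟩
    rintro x ⟨y, rfl⟩
    exact congrFun (congrArg DFunLike.coe hcomp) y
  have htr := hproj.trace
  rw [Matrix.rank, ← htr]
  rw [LinearMap.trace_eq_matrix_trace ℝ (Pi.basisFun ℝ (Fin n))]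
  congr 1
  ext i j
  simp [LinearMap.toMatrix_apply, Matrix.mulVecLin, Matrix.mulVec, dotProduct,
    Pi.single_apply]
end MFT

namespace MFT
open Finset Relation
variable {n : ℕ}

open scoped Classical in
theorem forestSet_zero (W : Matrix (Fin n) (Fin n) ℝ) (i j : Fin n) :
    Finset.univ.powerset.filter
        (fun A => IsInForest W A ∧ A.card = 0 ∧ InTreeRootedAt A i j)
      = if i = j then {(∅ : Finset (Fin n × Fin n))} else ∅ := by
  ext A
  simp only [Finset.mem_filter, Finset.mem_powerset, Finset.card_eq_zero]
  constructor
  · rintro ⟨-, hF, rfl, hIT⟩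
    have hroot : IsRoot (∅ : Finset (Fin n × Fin n)) i := by
      intro e he; exact absurd he (Finset.notMem_empty e)
    have : i = j := eq_of_isRoot_rtg hroot hIT.1
    rw [if_pos this]
    simp
  · intro hA
    by_cases hij : i = j
    · rw [if_pos hij] at hA
      simp only [Finset.mem_singleton] at hA
      subst hA; subst hij
      exact ⟨Finset.empty_subset _, isInForest_empty W, rfl,
        ⟨Relation.ReflTransGen.refl, fun e he => absurd he (Finset.notMem_empty e)⟩⟩
    · rw [if_neg hij] at hA
      exact absurd hA (Finset.notMem_empty A)

theorem forestMatrix_zero_eq_one (W : Matrix (Fin n) (Fin n) ℝ) :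
    forestMatrix W 0 = 1 := by
  classical
  ext i j
  rw [forestMatrix, Matrix.of_apply, forestSet_zero W i j]
  by_cases hij : i = j
  · subst hij
    rw [if_pos rfl, Finset.sum_singleton, forestWeight, Finset.prod_empty,
      Matrix.one_apply_eq]
  · rw [if_neg hij, Finset.sum_empty, Matrix.one_apply_ne hij]

open scoped Classical in
theorem sigmaW_zero_eq_one (W : Matrix (Fin n) (Fin n) ℝ) : sigmaW W 0 = 1 := by
  classical
  rw [sigmaW]
  have hset : Finset.univ.powerset.filter (fun A => IsInForest W A ∧ A.card = 0)
      = {(∅ : Finset (Fin n × Fin n))} := by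
    ext A
    simp only [Finset.mem_filter, Finset.mem_powerset, Finset.card_eq_zero,
      Finset.mem_singleton]
    constructor
    · rintro ⟨-, -, rfl⟩; rfl
    · rintro rfl; exact ⟨Finset.empty_subset _, isInForest_empty W, rfl⟩
  rw [hset, Finset.sum_singleton, forestWeight, Finset.prod_empty]

end MFT

/-- `L` has index `1`, `rank L = n − d`, `N(L) = R(J̃)`, `R(L) = N(J̃)`, and `J̃`
is the eigenprojection of `L` at `0`: the projection onto `N(L)` along `R(L)`. -/
theorem lap_index_one_eigenprojection {n : ℕ} (W : Matrix (Fin n) (Fin n) ℝ)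
    (hn : 1 < n) (hW : ∀ i j, 0 ≤ W i j) (hdiag : ∀ i, W i i = 0) :
    (lap W * lap W).rank = (lap W).rank ∧
    (lap W).rank < n ∧
    (lap W).rank = n - forestDim W ∧
    LinearMap.ker (lap W).mulVecLin = LinearMap.range (Jtilde W).mulVecLin ∧
    LinearMap.range (lap W).mulVecLin = LinearMap.ker (Jtilde W).mulVecLin ∧
    Jtilde W * Jtilde W = Jtilde W := by
  classical
  rcases Nat.eq_zero_or_pos (maxForestCard W) with hm0 | hmpos
  · -- degenerate case : no arcs at all
    have hW0 : W = 0 := MFT.W_eq_zero_of_max_eq_zero hW hdiag hm0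
    have hL : lap W = 0 := by
      rw [lap, hW0]; ext i j; simp [Matrix.diagonal_apply]
    have hJ : Jtilde W = 1 := by
      rw [Jtilde, hm0, MFT.forestMatrix_zero_eq_one, MFT.sigmaW_zero_eq_one]
      simp
    have hd : forestDim W = n := by rw [forestDim, hm0]; exact Nat.sub_zero n
    refine ⟨by rw [hL]; simp, ?_, ?_, ?_, ?_, ?_⟩
    · rw [hL, Matrix.rank_zero]; omega
    · rw [hL, Matrix.rank_zero, hd]; omega
    · rw [hL, hJ]; simp [Matrix.mulVecLin_zero, Matrix.mulVecLin_one]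
    · rw [hL, hJ]; simp [Matrix.mulVecLin_zero, Matrix.mulVecLin_one]
    · rw [hJ]; simp
  · -- main case
    set m := maxForestCard W with hmdef
    set σ := sigmaW W m with hσdef
    set Q := forestMatrix W m with hQdef
    set L := lap W with hLdef
    set J := Jtilde W with hJdef
    have hσpos : 0 < σ := MFT.sigmaW_max_pos W
    have h1 : Q * L = 0 := MFT.rec2_max_zero W hW hdiag
    have hm1 : m - 1 + 1 = m := Nat.succ_pred_eq_of_pos hmpos
    have h2 : forestMatrix W (m - 1) * L = σ • 1 - Q := by
      have h := MFT.rec2 W hW hdiag (m - 1)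
      rw [hm1] at h
      exact h
    have hQJ : Q = σ • J := by
      rw [hJdef, Jtilde, ← hσdef, ← hmdef, ← hQdef, smul_smul,
        mul_inv_cancel₀ hσpos.ne', one_smul]
    have hJL : J * L = 0 := by
      have h := h1
      rw [hQJ, Matrix.smul_mul] at h
      rcases smul_eq_zero.mp h with hz | hz
      · exact absurd hz hσpos.ne'
      · exact hz
    set f := L.mulVecLin with hfdef
    set g := J.mulVecLin with hgdef
    have hrangesub : LinearMap.range f ≤ LinearMap.ker g := by
      rintro x ⟨y, rfl⟩
      simp only [LinearMap.mem_ker, hgdef, hfdef, Matrix.mulVecLin_apply]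
      rw [Matrix.mulVec_mulVec, hJL, Matrix.zero_mulVec]
    have hkersub : LinearMap.ker f ≤ LinearMap.range g := by
      intro x hx
      have hx0 : L.mulVec x = 0 := hx
      have e := congrArg (fun M => M.mulVec x) h2
      simp only [← Matrix.mulVec_mulVec] at e
      rw [hx0, Matrix.mulVec_zero, Matrix.sub_mulVec, Matrix.smul_mulVec,
        Matrix.one_mulVec] at e
      have hQx : Q.mulVec x = σ • x := by
        have h' := e.symm
        rw [sub_eq_zero] at h'
        exact h'.symm
      refine ⟨x, ?_⟩
      simp only [hgdef, Matrix.mulVecLin_apply, hJdef, Jtilde, ← hmdef, ← hσdef, ← hQdef]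
      rw [Matrix.smul_mulVec, hQx, smul_smul, inv_mul_cancel₀ hσpos.ne', one_smul]
    have hrn : Module.finrank ℝ (LinearMap.range f) + Module.finrank ℝ (LinearMap.ker f)
        = n := by
      rw [LinearMap.finrank_range_add_finrank_ker f, Module.finrank_pi]
      simp
    have hqn : Module.finrank ℝ (LinearMap.range g) + Module.finrank ℝ (LinearMap.ker g)
        = n := by
      rw [LinearMap.finrank_range_add_finrank_ker g, Module.finrank_pi]
      simp
    have hC : Module.finrank ℝ (LinearMap.range f) ≤ Module.finrank ℝ (LinearMap.ker g) :=
      Submodule.finrank_mono hrangesub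
    have hD : Module.finrank ℝ (LinearMap.ker f) ≤ Module.finrank ℝ (LinearMap.range g) :=
      Submodule.finrank_mono hkersub
    have eq1 : LinearMap.ker f = LinearMap.range g :=
      Submodule.eq_of_le_of_finrank_le hkersub (by omega)
    have eq2 : LinearMap.range f = LinearMap.ker g :=
      Submodule.eq_of_le_of_finrank_le hrangesub (by omega)
    have hLJ : L * J = 0 := by
      ext i j
      have hmem : J.mulVec (Pi.single j 1) ∈ LinearMap.ker f := by
        rw [eq1]; exact ⟨Pi.single j 1, rfl⟩
      have hx : (L * J).mulVec (Pi.single j 1) = 0 := by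
        rw [← Matrix.mulVec_mulVec]
        exact hmem
      have := congrFun hx i
      rw [Matrix.mulVec_single] at this
      simpa using this
    have hLQ : L * Q = 0 := by
      rw [hQJ, Matrix.mul_smul, hLJ, smul_zero]
    have hQQ : Q * Q = σ • Q := by
      have e : forestMatrix W (m - 1) * L * Q = (σ • 1 - Q) * Q := by rw [h2]
      rw [Matrix.mul_assoc, hLQ, Matrix.mul_zero, Matrix.sub_mul, Matrix.smul_mul,
        Matrix.one_mul] at e
      have e' := e.symm
      rw [sub_eq_zero] at e'
      exact e'.symm
    have hJQ : J = σ⁻¹ • Q := by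
      rw [hQJ, smul_smul, inv_mul_cancel₀ hσpos.ne', one_smul]
    have hJJ : J * J = J := by
      rw [hJQ, Matrix.smul_mul, Matrix.mul_smul, hQQ, smul_smul, smul_smul,
        mul_assoc, inv_mul_cancel₀ hσpos.ne', mul_one]
    -- rank of J via trace
    have hmn : m ≤ n := MFT.maxForestCard_le W
    have htrQ : Q.trace = ((n - m : ℕ) : ℝ) * σ := MFT.trace_forestMatrix W m
    have hrkJ : J.rank = n - m := by
      have h := MFT.rank_eq_trace_idem J hJJ
      have htrJ : J.trace = ((n - m : ℕ) : ℝ) := by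
        rw [hJQ, Matrix.trace_smul, htrQ, smul_eq_mul,
          mul_comm ((n - m : ℕ) : ℝ) σ, ← mul_assoc,
          inv_mul_cancel₀ hσpos.ne', one_mul]
      rw [htrJ] at h
      exact_mod_cast h
    have hrkJ' : Module.finrank ℝ (LinearMap.range g) = n - m := hrkJ
    -- kernel of L is nontrivial : the all-ones vector
    have hones : f (fun _ => (1 : ℝ)) = 0 := by
      funext i
      simp only [hfdef, Matrix.mulVecLin_apply, hLdef, lap, Matrix.sub_mulVec]
      simp [Matrix.mulVec, dotProduct, Matrix.diagonal_apply, Finset.sum_ite_eq']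
    have hker_pos : 0 < Module.finrank ℝ (LinearMap.ker f) := by
      have hne : (⟨fun _ => (1 : ℝ), hones⟩ : LinearMap.ker f) ≠ 0 := by
        intro h
        have := congrFun (congrArg Subtype.val h) ⟨0, by omega⟩
        exact one_ne_zero this
      haveI : Nontrivial (LinearMap.ker f) := nontrivial_of_ne _ _ hne
      exact Module.finrank_pos
    have hrankL : (lap W).rank = Module.finrank ℝ (LinearMap.range f) := rfl
    have hrankLL : (lap W * lap W).rank
        = Module.finrank ℝ (LinearMap.range (L * L).mulVecLin) := rfl
    have hkerLL : LinearMap.ker (L * L).mulVecLin = LinearMap.ker f := by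
      apply le_antisymm
      · intro x hx
        have hx' : L.mulVec (L.mulVec x) = 0 := by
          have : (L * L).mulVec x = 0 := hx
          rwa [← Matrix.mulVec_mulVec] at this
        have hy1 : L.mulVec x ∈ LinearMap.range g := by
          rw [← eq1]; exact hx'
        have hy2 : L.mulVec x ∈ LinearMap.ker g := by
          rw [← eq2]; exact ⟨x, rfl⟩
        obtain ⟨z, hz⟩ := hy1
        have hgg : g (g z) = g z := by
          simp only [hgdef, Matrix.mulVecLin_apply]
          rw [Matrix.mulVec_mulVec, hJJ]
        have : L.mulVec x = 0 := by
          have h0 : g (L.mulVec x) = 0 := hy2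
          rw [← hz] at h0 ⊢
          rw [hgg] at h0
          exact h0
        exact this
      · intro x hx
        have hx' : L.mulVec x = 0 := hx
        show (L * L).mulVec x = 0
        rw [← Matrix.mulVec_mulVec, hx', Matrix.mulVec_zero]
    have hrnLL : Module.finrank ℝ (LinearMap.range (L * L).mulVecLin)
        + Module.finrank ℝ (LinearMap.ker (L * L).mulVecLin) = n := by
      rw [LinearMap.finrank_range_add_finrank_ker, Module.finrank_pi]
      simp
    refine ⟨?_, ?_, ?_, eq1, eq2, hJJ⟩
    · rw [hrankLL, hrankL]
      rw [hkerLL] at hrnLL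
      omega
    · rw [hrankL]; omega
    · rw [hrankL, forestDim, ← hmdef]
      omega
end

section
/- The group inverse of the Laplacian admits the representation L^# = (L + αJ̃)^{-1} − α^{-1}J̃ for every α ≠ 0; equivalently L^# = (L + αJ̃)^{-1}(I − J̃), and J̃ = I − LL^#. -/
open Matrix Finset Polynomial

namespace GroupInvAux

variable {n : ℕ}

def reach (A : Finset (Fin n × Fin n)) (a b : Fin n) : Prop :=
  Relation.ReflTransGen (fun x y => (x, y) ∈ A) a b

def noOut (A : Finset (Fin n × Fin n)) (v : Fin n) : Prop := ∀ e ∈ A, e.1 ≠ v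

def outUnique (A : Finset (Fin n × Fin n)) : Prop :=
  ∀ e ∈ A, ∀ f ∈ A, e.1 = f.1 → e = f

def acyclic (A : Finset (Fin n × Fin n)) : Prop :=
  ∀ i, ¬ Relation.TransGen (fun a b => (a, b) ∈ A) i i

theorem isInForest_iff {W : Matrix (Fin n) (Fin n) ℝ} {A : Finset (Fin n × Fin n)} :
    IsInForest W A ↔
      (∀ e ∈ A, e.1 ≠ e.2 ∧ 0 < W e.1 e.2) ∧ outUnique A ∧ acyclic A := by
  unfold IsInForest outUnique acyclic
  refine and_congr_right fun _ => and_congr_left fun _ => ?_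
  constructor
  · intro h e he f hf hef
    exact Finset.card_le_one.mp (h e.1)
      e (Finset.mem_filter.mpr ⟨he, rfl⟩) f (Finset.mem_filter.mpr ⟨hf, hef.symm⟩)
  · intro h i
    refine Finset.card_le_one.mpr fun a ha b hb => ?_
    rw [Finset.mem_filter] at ha hb
    exact h a ha.1 b hb.1 (ha.2.trans hb.2.symm)

theorem reach_mono {A B : Finset (Fin n × Fin n)} (h : A ⊆ B) {a b : Fin n}
    (hr : reach A a b) : reach B a b :=
  Relation.ReflTransGen.mono (fun _ _ hx => h hx) a b hr

theorem forest_subset {W : Matrix (Fin n) (Fin n) ℝ} {A B : Finset (Fin n × Fin n)}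
    (hB : B ⊆ A) (hA : IsInForest W A) : IsInForest W B := by
  rw [isInForest_iff] at hA ⊢
  refine ⟨fun e he => hA.1 e (hB he), fun e he f hf => hA.2.1 e (hB he) f (hB hf),
    fun i hi => hA.2.2 i (Relation.TransGen.mono (fun _ _ hx => hB hx) i i hi)⟩

theorem noOut_reach {A : Finset (Fin n × Fin n)} {a b : Fin n}
    (hn : noOut A a) (hr : reach A a b) : a = b := by
  rcases Relation.ReflTransGen.cases_head hr with h | ⟨c, hc, _⟩
  · exact h
  · exact absurd rfl (hn _ hc)

theorem chain_total {A : Finset (Fin n × Fin n)} (hA : outUnique A) {a b c : Fin n}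
    (h1 : reach A a b) (h2 : reach A a c) : reach A b c ∨ reach A c b := by
  induction h1 using Relation.ReflTransGen.head_induction_on with
  | refl => exact Or.inl h2
  | head h' h ih =>
    rename_i x y
    rcases Relation.ReflTransGen.cases_head h2 with rfl | ⟨d, hd, h2'⟩
    · exact Or.inr (Relation.ReflTransGen.head h' h)
    · have : y = d := congrArg Prod.snd (hA (x, y) h' (x, d) hd rfl)
      exact ih (this ▸ h2')

theorem reach_erase {A : Finset (Fin n × Fin n)} {e : Fin n × Fin n} {a b : Fin n}
    (h : reach A a b) : reach (A.erase e) a b ∨ reach (A.erase e) a e.1 := by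
  induction h using Relation.ReflTransGen.head_induction_on with
  | refl => exact Or.inl Relation.ReflTransGen.refl
  | head h' h ih =>
    rename_i x y
    by_cases hxe : (x, y) = e
    · right
      have : x = e.1 := congrArg Prod.fst hxe
      exact this ▸ Relation.ReflTransGen.refl
    · have hm : (x, y) ∈ A.erase e := Finset.mem_erase.mpr ⟨hxe, h'⟩
      rcases ih with h1 | h1
      · exact Or.inl (Relation.ReflTransGen.head hm h1)
      · exact Or.inr (Relation.ReflTransGen.head hm h1)

theorem reach_insert_elim {A : Finset (Fin n × Fin n)} {e : Fin n × Fin n} {a b : Fin n}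
    (h : reach (insert e A) a b) :
    reach A a b ∨ (reach A a e.1 ∧ reach (insert e A) e.2 b) := by
  induction h using Relation.ReflTransGen.head_induction_on with
  | refl => exact Or.inl Relation.ReflTransGen.refl
  | head h' h ih =>
    rename_i x y
    by_cases hxe : (x, y) = e
    · refine Or.inr ⟨?_, ?_⟩
      · have : x = e.1 := congrArg Prod.fst hxe
        exact this ▸ Relation.ReflTransGen.refl
      · have : y = e.2 := congrArg Prod.snd hxe
        exact this ▸ h
    · have hm : (x, y) ∈ A := by
        rcases Finset.mem_insert.mp h' with h1 | h1
        · exact absurd h1 hxe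
        · exact h1
      rcases ih with h1 | ⟨h1, h2⟩
      · exact Or.inl (Relation.ReflTransGen.head hm h1)
      · exact Or.inr ⟨Relation.ReflTransGen.head hm h1, h2⟩

theorem transGen_insert_elim {A : Finset (Fin n × Fin n)} {e : Fin n × Fin n} {a b : Fin n}
    (h : Relation.TransGen (fun x y => (x, y) ∈ insert e A) a b) :
    Relation.TransGen (fun x y => (x, y) ∈ A) a b ∨
      (reach A a e.1 ∧ reach (insert e A) e.2 b) := by
  rcases Relation.TransGen.head'_iff.mp h with ⟨c, hc, hcb⟩
  by_cases hxe : (a, c) = e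
  · refine Or.inr ⟨?_, ?_⟩
    · have : a = e.1 := congrArg Prod.fst hxe
      exact this ▸ Relation.ReflTransGen.refl
    · have : c = e.2 := congrArg Prod.snd hxe
      exact this ▸ hcb
  · have hm : (a, c) ∈ A := by
      rcases Finset.mem_insert.mp hc with h1 | h1
      · exact absurd h1 hxe
      · exact h1
    rcases reach_insert_elim hcb with h1 | ⟨h1, h2⟩
    · exact Or.inl (Relation.TransGen.head' hm h1)
    · exact Or.inr ⟨Relation.ReflTransGen.head hm h1, h2⟩

theorem forest_insert {W : Matrix (Fin n) (Fin n) ℝ} {A : Finset (Fin n × Fin n)}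
    {u v : Fin n} (hA : IsInForest W A) (hu : noOut A u) (hv : ¬ reach A v u)
    (huv : u ≠ v) (hw : 0 < W u v) : IsInForest W (insert (u, v) A) := by
  rw [isInForest_iff] at hA ⊢
  refine ⟨?_, ?_, ?_⟩
  · intro e he
    rcases Finset.mem_insert.mp he with rfl | he
    · exact ⟨huv, hw⟩
    · exact hA.1 e he
  · intro e he f hf hef
    rcases Finset.mem_insert.mp he with rfl | he <;> rcases Finset.mem_insert.mp hf with rfl | hf
    · rfl
    · exact absurd hef.symm (hu f hf)
    · exact absurd hef (hu e he)
    · exact hA.2.1 e he f hf hef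
  · intro i hi
    rcases transGen_insert_elim hi with h1 | ⟨h1, h2⟩
    · exact hA.2.2 i h1
    · -- reach A i u and reach (insert (u,v) A) v i ; so reach (insert) v u, contradiction
      have h3 : reach (insert (u, v) A) v u :=
        h2.trans (reach_mono (Finset.subset_insert _ _) h1)
      rcases reach_insert_elim h3 with h4 | ⟨h4, _⟩
      · exact hv h4
      · exact hv h4

noncomputable def tgt (A : Finset (Fin n × Fin n)) (i : Fin n) : Fin n := by
  classical exact if h : ∃ l, (i, l) ∈ A then h.choose else i

theorem tgt_mem {A : Finset (Fin n × Fin n)} {i : Fin n} (h : ∃ l, (i, l) ∈ A) :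
    (i, tgt A i) ∈ A := by
  rw [tgt, dif_pos h]
  exact h.choose_spec

theorem tgt_eq {A : Finset (Fin n × Fin n)} (hA : outUnique A) {i l : Fin n}
    (h : (i, l) ∈ A) : tgt A i = l := by
  have hm : (i, tgt A i) ∈ A := tgt_mem ⟨l, h⟩
  exact congrArg Prod.snd (hA _ hm _ h rfl)

theorem not_noOut_iff {A : Finset (Fin n × Fin n)} {i : Fin n} :
    ¬ noOut A i ↔ ∃ l, (i, l) ∈ A := by
  unfold noOut
  push_neg
  constructor
  · rintro ⟨e, he, h1⟩
    exact ⟨e.2, by rwa [← h1, Prod.mk.eta]⟩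
  · rintro ⟨l, hl⟩
    exact ⟨(i, l), hl, rfl⟩

end GroupInvAux
namespace GroupInvAux

open Finset
variable {n : ℕ} {W : Matrix (Fin n) (Fin n) ℝ} {A : Finset (Fin n × Fin n)}
  {i l b v : Fin n}

theorem forest_outUnique (hF : IsInForest W A) : outUnique A := (isInForest_iff.mp hF).2.1
theorem forest_acyclic (hF : IsInForest W A) : acyclic A := (isInForest_iff.mp hF).2.2
theorem forest_pos (hF : IsInForest W A) {e : Fin n × Fin n} (he : e ∈ A) :
    0 < W e.1 e.2 := (hF.1 e he).2

theorem noOut_mono {B : Finset (Fin n × Fin n)} (h : B ⊆ A) (hn : noOut A v) : noOut B v :=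
  fun e he => hn e (h he)

theorem noOut_erase_out (hF : IsInForest W A) (hmem : (i, l) ∈ A) :
    noOut (A.erase (i, l)) i := by
  intro e he hei
  rcases Finset.mem_erase.mp he with ⟨hne, heA⟩
  exact hne (forest_outUnique hF e heA (i, l) hmem (by rw [hei]))

theorem not_reach_erase_out (hF : IsInForest W A) (hmem : (i, l) ∈ A) :
    ¬ reach (A.erase (i, l)) l i := fun hr =>
  forest_acyclic hF i
    (Relation.TransGen.head' hmem (reach_mono (Finset.erase_subset _ _) hr))

theorem reach_erase_out (hF : IsInForest W A) (hmem : (i, l) ∈ A) (hr : reach A l b) :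
    reach (A.erase (i, l)) l b := by
  rcases reach_erase (e := (i, l)) hr with h | h
  · exact h
  · exact absurd h (not_reach_erase_out hF hmem)

theorem noOut_insert {u : Fin n} (hn : noOut A v) (huv : u ≠ v) :
    noOut (insert (u, l) A) v := by
  intro e he
  rcases Finset.mem_insert.mp he with rfl | he
  · exact huv
  · exact hn e he

theorem head_step (hr : reach A i b) (hib : i ≠ b) : ∃ l, (i, l) ∈ A ∧ reach A l b := by
  rcases Relation.ReflTransGen.cases_head hr with h | ⟨c, hc, h⟩
  · exact absurd h hib
  · exact ⟨c, hc, h⟩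

theorem inTree_self_iff : InTreeRootedAt A i i ↔ noOut A i :=
  ⟨fun h => h.2, fun h => ⟨Relation.ReflTransGen.refl, h⟩⟩

theorem pair_sum {f : Fin n → ℝ} {c : Fin n → Finset (Fin n × Fin n) → Prop}
    [∀ t A, Decidable (c t A)] {g : Finset (Fin n × Fin n) → ℝ} :
    ∑ t : Fin n, f t * ∑ A ∈ univ.filter (c t), g A
      = ∑ p ∈ univ.filter (fun p : Fin n × Finset (Fin n × Fin n) => c p.1 p.2),
          f p.1 * g p.2 := by
  simp only [Finset.sum_filter, Fintype.sum_prod_type, Finset.mul_sum, mul_ite, mul_zero]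

theorem restrict_pos (hW : ∀ a b, 0 ≤ W a b)
    (c : Fin n × Finset (Fin n × Fin n) → Prop) [DecidablePred c]
    (g : Finset (Fin n × Fin n) → ℝ) :
    ∑ p ∈ univ.filter c, W i p.1 * g p.2
      = ∑ p ∈ univ.filter (fun p => 0 < W i p.1 ∧ c p), W i p.1 * g p.2 := by
  classical
  rw [← Finset.sum_filter_of_ne (s := univ.filter c) (p := fun p => 0 < W i p.1)
      (fun x _ hx => lt_of_le_of_ne (hW i x.1) fun h => hx (by rw [← h, zero_mul]))]
  rw [Finset.filter_filter]
  exact Finset.sum_congr (Finset.filter_congr fun x _ => and_comm) fun _ _ => rfl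

end GroupInvAux
namespace GroupInvAux

open Finset
variable {n : ℕ} {W : Matrix (Fin n) (Fin n) ℝ}

theorem inTree_iff {A : Finset (Fin n × Fin n)} {a b : Fin n} :
    InTreeRootedAt A a b ↔ reach A a b ∧ noOut A b := Iff.rfl

open scoped Classical in
theorem bij_one (hW : ∀ a b, 0 ≤ W a b) (hdiag : ∀ a, W a a = 0) (k : ℕ) (i : Fin n) :
    ∑ A ∈ univ.filter
        (fun A : Finset (Fin n × Fin n) =>
          (IsInForest W A ∧ A.card = k + 1) ∧ ¬ noOut A i), forestWeight W A
    = ∑ p ∈ univ.filter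
        (fun p : Fin n × Finset (Fin n × Fin n) =>
          0 < W i p.1 ∧ (IsInForest W p.2 ∧ p.2.card = k) ∧ noOut p.2 i ∧
            ¬ reach p.2 p.1 i), W i p.1 * forestWeight W p.2 := by
  have hine : ∀ l : Fin n, 0 < W i l → i ≠ l := fun l hl h => by
    rw [← h, hdiag] at hl; exact lt_irrefl _ hl
  refine Finset.sum_nbij' (fun A => (tgt A i, A.erase (i, tgt A i)))
    (fun p => insert (i, p.1) p.2) ?_ ?_ ?_ ?_ ?_
  · intro A hA
    obtain ⟨-, ⟨hF, hcard⟩, hni⟩ := Finset.mem_filter.mp hA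
    have hmem : (i, tgt A i) ∈ A := tgt_mem (not_noOut_iff.mp hni)
    refine Finset.mem_filter.mpr ⟨Finset.mem_univ _, forest_pos hF hmem,
      ⟨forest_subset (Finset.erase_subset _ _) hF, ?_⟩,
      noOut_erase_out hF hmem, not_reach_erase_out hF hmem⟩
    rw [Finset.card_erase_of_mem hmem, hcard]
    omega
  · intro p hp
    obtain ⟨-, hw, ⟨hF, hcard⟩, hni, hnr⟩ := Finset.mem_filter.mp hp
    refine Finset.mem_filter.mpr ⟨Finset.mem_univ _,
      ⟨forest_insert hF hni hnr (hine _ hw) hw, ?_⟩,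
      fun h => h (i, p.1) (Finset.mem_insert_self _ _) rfl⟩
    rw [Finset.card_insert_of_notMem (fun h => hni _ h rfl), hcard]
  · intro A hA
    dsimp only
    obtain ⟨-, ⟨hF, hcard⟩, hni⟩ := Finset.mem_filter.mp hA
    exact Finset.insert_erase (tgt_mem (not_noOut_iff.mp hni))
  · intro p hp
    obtain ⟨-, hw, ⟨hF, hcard⟩, hni, hnr⟩ := Finset.mem_filter.mp hp
    have hFi : IsInForest W (insert (i, p.1) p.2) :=
      forest_insert hF hni hnr (hine _ hw) hw
    have h1 : tgt (insert (i, p.1) p.2) i = p.1 :=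
      tgt_eq (forest_outUnique hFi) (Finset.mem_insert_self _ _)
    rw [h1, Finset.erase_insert (fun h => hni _ h rfl)]
  · intro A hA
    dsimp only
    obtain ⟨-, ⟨hF, hcard⟩, hni⟩ := Finset.mem_filter.mp hA
    have hmem : (i, tgt A i) ∈ A := tgt_mem (not_noOut_iff.mp hni)
    have h1 := Finset.prod_erase_mul A (fun e => W e.1 e.2) hmem
    unfold forestWeight
    rw [← h1, mul_comm]

open scoped Classical in
theorem bij_two (hW : ∀ a b, 0 ≤ W a b) (hdiag : ∀ a, W a a = 0) (k : ℕ) (i j : Fin n)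
    (hij : i ≠ j) :
    ∑ p ∈ univ.filter
        (fun p : Fin n × Finset (Fin n × Fin n) =>
          0 < W i p.1 ∧ ((IsInForest W p.2 ∧ p.2.card = k) ∧ InTreeRootedAt p.2 p.1 j) ∧
            noOut p.2 i), W i p.1 * forestWeight W p.2
    = ∑ A ∈ univ.filter
        (fun A : Finset (Fin n × Fin n) =>
          IsInForest W A ∧ A.card = k + 1 ∧ InTreeRootedAt A i j), forestWeight W A := by
  have hine : ∀ l : Fin n, 0 < W i l → i ≠ l := fun l hl h => by
    rw [← h, hdiag] at hl; exact lt_irrefl _ hl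
  refine Finset.sum_nbij' (fun p => insert (i, p.1) p.2)
    (fun A => (tgt A i, A.erase (i, tgt A i))) ?_ ?_ ?_ ?_ ?_
  · intro p hp
    obtain ⟨-, hw, ⟨⟨hF, hcard⟩, hrl, hnj⟩, hni⟩ := Finset.mem_filter.mp hp
    have hnr : ¬ reach p.2 p.1 i := by
      intro hr
      rcases chain_total (forest_outUnique hF) hr hrl with h2 | h2
      · exact hij (noOut_reach hni h2)
      · exact hij (noOut_reach hnj h2).symm
    refine Finset.mem_filter.mpr ⟨Finset.mem_univ _,
      forest_insert hF hni hnr (hine _ hw) hw, ?_,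
      Relation.ReflTransGen.head (Finset.mem_insert_self _ _)
        (reach_mono (Finset.subset_insert _ _) hrl),
      noOut_insert hnj hij⟩
    rw [Finset.card_insert_of_notMem (fun h => hni _ h rfl), hcard]
  · intro A hA
    obtain ⟨-, hF, hcard, hrij, hnj⟩ := Finset.mem_filter.mp hA
    obtain ⟨l, hl, hlj⟩ := head_step hrij hij
    have ht : tgt A i = l := tgt_eq (forest_outUnique hF) hl
    rw [ht]
    refine Finset.mem_filter.mpr ⟨Finset.mem_univ _, forest_pos hF hl,
      ⟨⟨forest_subset (Finset.erase_subset _ _) hF, ?_⟩,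
        reach_erase_out hF hl hlj, noOut_mono (Finset.erase_subset _ _) hnj⟩,
      noOut_erase_out hF hl⟩
    rw [Finset.card_erase_of_mem hl, hcard]
    omega
  · intro p hp
    obtain ⟨-, hw, ⟨⟨hF, hcard⟩, hrl, hnj⟩, hni⟩ := Finset.mem_filter.mp hp
    have hFi : IsInForest W (insert (i, p.1) p.2) := by
      refine forest_insert hF hni ?_ (hine _ hw) hw
      intro hr
      rcases chain_total (forest_outUnique hF) hr hrl with h2 | h2
      · exact hij (noOut_reach hni h2)
      · exact hij (noOut_reach hnj h2).symm
    have h1 : tgt (insert (i, p.1) p.2) i = p.1 :=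
      tgt_eq (forest_outUnique hFi) (Finset.mem_insert_self _ _)
    rw [h1, Finset.erase_insert (fun h => hni _ h rfl)]
  · intro A hA
    dsimp only
    obtain ⟨-, hF, hcard, hrij, hnj⟩ := Finset.mem_filter.mp hA
    obtain ⟨l, hl, hlj⟩ := head_step hrij hij
    have ht : tgt A i = l := tgt_eq (forest_outUnique hF) hl
    rw [ht]
    exact Finset.insert_erase hl
  · intro p hp
    obtain ⟨-, hw, ⟨⟨hF, hcard⟩, hrl, hnj⟩, hni⟩ := Finset.mem_filter.mp hp
    have h1 := Finset.prod_insert (s := p.2) (f := fun e => W e.1 e.2)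
      (fun h : (i, p.1) ∈ p.2 => hni _ h rfl)
    unfold forestWeight
    rw [h1]

end GroupInvAux
namespace GroupInvAux

open Finset
variable {n : ℕ} {W : Matrix (Fin n) (Fin n) ℝ}

open scoped Classical in
noncomputable def swapMap (i : Fin n) (p : Fin n × Finset (Fin n × Fin n)) :
    Fin n × Finset (Fin n × Fin n) :=
  if reach (p.2.erase (i, tgt p.2 i)) p.1 i then p
  else (tgt p.2 i, insert (i, p.1) (p.2.erase (i, tgt p.2 i)))

open scoped Classical in
theorem bij_three (hW : ∀ a b, 0 ≤ W a b) (hdiag : ∀ a, W a a = 0) (k : ℕ) (i j : Fin n)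
    (hij : i ≠ j) :
    ∑ p ∈ univ.filter
        (fun p : Fin n × Finset (Fin n × Fin n) =>
          0 < W i p.1 ∧ ((IsInForest W p.2 ∧ p.2.card = k) ∧ InTreeRootedAt p.2 p.1 j) ∧
            ¬ noOut p.2 i), W i p.1 * forestWeight W p.2
    = ∑ p ∈ univ.filter
        (fun p : Fin n × Finset (Fin n × Fin n) =>
          0 < W i p.1 ∧ (IsInForest W p.2 ∧ p.2.card = k ∧ InTreeRootedAt p.2 i j)),
        W i p.1 * forestWeight W p.2 := by
  have hine : ∀ l : Fin n, 0 < W i l → i ≠ l := fun l hl h => by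
    rw [← h, hdiag] at hl; exact lt_irrefl _ hl
  refine Finset.sum_nbij' (swapMap i) (swapMap i) ?_ ?_ ?_ ?_ ?_
  · -- membership forward
    rintro ⟨l, A⟩ hp
    obtain ⟨-, hw, ⟨⟨hF, hcard⟩, hrl, hnj⟩, hni⟩ := Finset.mem_filter.mp hp
    dsimp only at hw hrl hnj hni hF hcard ⊢
    have hs : (i, tgt A i) ∈ A := tgt_mem (not_noOut_iff.mp hni)
    rw [swapMap]
    try dsimp only
    split_ifs with hb
    · -- stay: (l, A)
      have h1 : reach A l i := reach_mono (Finset.erase_subset _ _) hb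
      have h2 : reach A i j := by
        rcases chain_total (forest_outUnique hF) h1 hrl with h2 | h2
        · exact h2
        · exact absurd (noOut_reach hnj h2).symm hij
      exact Finset.mem_filter.mpr ⟨Finset.mem_univ _, hw, hF, hcard, h2, hnj⟩
    · -- swap to (tgt A i, insert (i,l) (A.erase (i, tgt A i)))
      have hkpos : 0 < k := hcard ▸ Finset.card_pos.mpr ⟨_, hs⟩
      have hCF : IsInForest W (A.erase (i, tgt A i)) :=
        forest_subset (Finset.erase_subset _ _) hF
      have hCno : noOut (A.erase (i, tgt A i)) i := noOut_erase_out hF hs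
      have hBF : IsInForest W (insert (i, l) (A.erase (i, tgt A i))) :=
        forest_insert hCF hCno hb (hine _ hw) hw
      have hClj : reach (A.erase (i, tgt A i)) l j := by
        rcases reach_erase (e := (i, tgt A i)) hrl with h | h
        · exact h
        · exact absurd h hb
      refine Finset.mem_filter.mpr ⟨Finset.mem_univ _, forest_pos hF hs, hBF, ?_,
        Relation.ReflTransGen.head (Finset.mem_insert_self _ _)
          (reach_mono (Finset.subset_insert _ _) hClj),
        noOut_insert (noOut_mono (Finset.erase_subset _ _) hnj) hij⟩
      rw [Finset.card_insert_of_notMem (fun h => hCno _ h rfl),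
        Finset.card_erase_of_mem hs, hcard]
      omega
  · -- membership backward
    rintro ⟨t, B⟩ hq
    obtain ⟨-, hw, hF, hcard, hrij, hnj⟩ := Finset.mem_filter.mp hq
    dsimp only at hw hrij hnj hF hcard ⊢
    obtain ⟨l0, hl0, hl0j⟩ := head_step hrij hij
    have ht : tgt B i = l0 := tgt_eq (forest_outUnique hF) hl0
    have hl' : (i, tgt B i) ∈ B := ht ▸ hl0
    have hl'j : reach B (tgt B i) j := ht ▸ hl0j
    rw [swapMap]
    try dsimp only
    split_ifs with hb
    · -- stay
      have h1 : reach B t j := (reach_mono (Finset.erase_subset _ _) hb).trans hrij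
      exact Finset.mem_filter.mpr ⟨Finset.mem_univ _, hw, ⟨⟨hF, hcard⟩, h1, hnj⟩,
        fun h => h _ hl0 rfl⟩
    · have hkpos : 0 < k := hcard ▸ Finset.card_pos.mpr ⟨_, hl'⟩
      have hCF : IsInForest W (B.erase (i, tgt B i)) :=
        forest_subset (Finset.erase_subset _ _) hF
      have hCno : noOut (B.erase (i, tgt B i)) i := noOut_erase_out hF hl'
      have hBF : IsInForest W (insert (i, t) (B.erase (i, tgt B i))) :=
        forest_insert hCF hCno hb (hine _ hw) hw
      refine Finset.mem_filter.mpr ⟨Finset.mem_univ _, forest_pos hF hl', ⟨⟨hBF, ?_⟩,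
        reach_mono (Finset.subset_insert _ _) (reach_erase_out hF hl' hl'j),
        noOut_insert (noOut_mono (Finset.erase_subset _ _) hnj) hij⟩,
        fun h => h (i, t) (Finset.mem_insert_self _ _) rfl⟩
      rw [Finset.card_insert_of_notMem (fun h => hCno _ h rfl),
        Finset.card_erase_of_mem hl', hcard]
      omega
  · -- left inverse
    rintro ⟨l, A⟩ hp
    obtain ⟨-, hw, ⟨⟨hF, hcard⟩, hrl, hnj⟩, hni⟩ := Finset.mem_filter.mp hp
    dsimp only at hw hrl hnj hF hcard hni
    have hs : (i, tgt A i) ∈ A := tgt_mem (not_noOut_iff.mp hni)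
    show swapMap i (swapMap i (l, A)) = (l, A)
    by_cases hb : reach (A.erase (i, tgt A i)) l i
    · have hin : swapMap i (l, A) = (l, A) := by
        rw [swapMap]; dsimp only; rw [if_pos hb]
      rw [hin, hin]
    · have hCno : noOut (A.erase (i, tgt A i)) i := noOut_erase_out hF hs
      have hBF : IsInForest W (insert (i, l) (A.erase (i, tgt A i))) :=
        forest_insert (forest_subset (Finset.erase_subset _ _) hF) hCno hb (hine _ hw) hw
      have hin : swapMap i (l, A) = (tgt A i, insert (i, l) (A.erase (i, tgt A i))) := by
        rw [swapMap]; dsimp only; rw [if_neg hb]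
      rw [hin]
      have h1 : tgt (insert (i, l) (A.erase (i, tgt A i))) i = l :=
        tgt_eq (forest_outUnique hBF) (Finset.mem_insert_self _ _)
      have h2 : (insert (i, l) (A.erase (i, tgt A i))).erase (i, l) = A.erase (i, tgt A i) :=
        Finset.erase_insert (fun h => hCno _ h rfl)
      rw [swapMap]
      dsimp only
      rw [h1, h2, if_neg (not_reach_erase_out hF hs), Finset.insert_erase hs]
  · -- right inverse
    rintro ⟨t, B⟩ hq
    obtain ⟨-, hw, hF, hcard, hrij, hnj⟩ := Finset.mem_filter.mp hq
    dsimp only at hw hrij hnj hF hcard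
    obtain ⟨l0, hl0, hl0j⟩ := head_step hrij hij
    have ht : tgt B i = l0 := tgt_eq (forest_outUnique hF) hl0
    have hl' : (i, tgt B i) ∈ B := ht ▸ hl0
    show swapMap i (swapMap i (t, B)) = (t, B)
    by_cases hb : reach (B.erase (i, tgt B i)) t i
    · have hin : swapMap i (t, B) = (t, B) := by
        rw [swapMap]; dsimp only; rw [if_pos hb]
      rw [hin, hin]
    · have hCno : noOut (B.erase (i, tgt B i)) i := noOut_erase_out hF hl'
      have hBF : IsInForest W (insert (i, t) (B.erase (i, tgt B i))) :=
        forest_insert (forest_subset (Finset.erase_subset _ _) hF) hCno hb (hine _ hw) hw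
      have hin : swapMap i (t, B) = (tgt B i, insert (i, t) (B.erase (i, tgt B i))) := by
        rw [swapMap]; dsimp only; rw [if_neg hb]
      rw [hin]
      have h1 : tgt (insert (i, t) (B.erase (i, tgt B i))) i = t :=
        tgt_eq (forest_outUnique hBF) (Finset.mem_insert_self _ _)
      have h2 : (insert (i, t) (B.erase (i, tgt B i))).erase (i, t) = B.erase (i, tgt B i) :=
        Finset.erase_insert (fun h => hCno _ h rfl)
      rw [swapMap]
      dsimp only
      rw [h1, h2, if_neg (not_reach_erase_out hF hl'), Finset.insert_erase hl']
  · -- weights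
    rintro ⟨l, A⟩ hp
    obtain ⟨-, hw, ⟨⟨hF, hcard⟩, hrl, hnj⟩, hni⟩ := Finset.mem_filter.mp hp
    dsimp only at hw hrl hnj hF hcard hni
    have hs : (i, tgt A i) ∈ A := tgt_mem (not_noOut_iff.mp hni)
    rw [swapMap]
    try dsimp only
    split_ifs with hb
    · rfl
    · have hCno : noOut (A.erase (i, tgt A i)) i := noOut_erase_out hF hs
      have h1 := Finset.prod_erase_mul A (fun e => W e.1 e.2) hs
      have h2 := Finset.prod_insert (s := A.erase (i, tgt A i))
        (f := fun e => W e.1 e.2) (fun h : (i, l) ∈ A.erase (i, tgt A i) => hCno _ h rfl)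
      unfold forestWeight
      rw [h2, ← h1]
      ring
end GroupInvAux
namespace GroupInvAux

open Finset
variable {n : ℕ} {W : Matrix (Fin n) (Fin n) ℝ}

open scoped Classical in
theorem key_entry (hW : ∀ a b, 0 ≤ W a b) (hdiag : ∀ a, W a a = 0) (k : ℕ) (i j : Fin n) :
    (forestMatrix W (k+1)) i j + ∑ t, W i t * (forestMatrix W k) i j
      = sigmaW W (k+1) * (if i = j then (1:ℝ) else 0)
        + ∑ l, W i l * (forestMatrix W k) l j := by
  simp only [forestMatrix, Matrix.of_apply, sigmaW, Finset.powerset_univ]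
  have hpair1 : (∑ t, W i t * ∑ A ∈ univ.filter
        (fun A : Finset (Fin n × Fin n) =>
          IsInForest W A ∧ A.card = k ∧ InTreeRootedAt A i j), forestWeight W A)
      = ∑ p ∈ univ.filter (fun p : Fin n × Finset (Fin n × Fin n) =>
          0 < W i p.1 ∧ (IsInForest W p.2 ∧ p.2.card = k ∧ InTreeRootedAt p.2 i j)),
          W i p.1 * forestWeight W p.2 :=
    (pair_sum (f := fun t => W i t)
      (c := fun _ A => IsInForest W A ∧ A.card = k ∧ InTreeRootedAt A i j)
      (g := forestWeight W)).trans (restrict_pos hW _ _)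
  have hpair2 : (∑ l, W i l * ∑ A ∈ univ.filter
        (fun A : Finset (Fin n × Fin n) =>
          IsInForest W A ∧ A.card = k ∧ InTreeRootedAt A l j), forestWeight W A)
      = ∑ p ∈ univ.filter (fun p : Fin n × Finset (Fin n × Fin n) =>
          0 < W i p.1 ∧ (IsInForest W p.2 ∧ p.2.card = k ∧ InTreeRootedAt p.2 p.1 j)),
          W i p.1 * forestWeight W p.2 :=
    (pair_sum (f := fun t => W i t)
      (c := fun l A => IsInForest W A ∧ A.card = k ∧ InTreeRootedAt A l j)
      (g := forestWeight W)).trans (restrict_pos hW _ _)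
  rw [hpair1, hpair2]
  by_cases hij : i = j
  · subst hij
    rw [if_pos rfl, mul_one]
    have hsplitσ := Finset.sum_filter_add_sum_filter_not
      (univ.filter (fun A : Finset (Fin n × Fin n) => IsInForest W A ∧ A.card = k + 1))
      (fun A => noOut A i) (forestWeight W)
    rw [Finset.filter_filter, Finset.filter_filter] at hsplitσ
    have hQ : univ.filter (fun A : Finset (Fin n × Fin n) =>
          (IsInForest W A ∧ A.card = k + 1) ∧ noOut A i)
        = univ.filter (fun A => IsInForest W A ∧ A.card = k + 1 ∧ InTreeRootedAt A i i) :=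
      Finset.filter_congr fun A _ => by rw [inTree_self_iff]; tauto
    rw [hQ] at hsplitσ
    have hsplitp := Finset.sum_filter_add_sum_filter_not
      (univ.filter (fun p : Fin n × Finset (Fin n × Fin n) =>
        0 < W i p.1 ∧ (IsInForest W p.2 ∧ p.2.card = k ∧ InTreeRootedAt p.2 i i)))
      (fun p => reach p.2 p.1 i) (fun p => W i p.1 * forestWeight W p.2)
    rw [Finset.filter_filter, Finset.filter_filter] at hsplitp
    have hreach : univ.filter (fun p : Fin n × Finset (Fin n × Fin n) =>
          (0 < W i p.1 ∧ (IsInForest W p.2 ∧ p.2.card = k ∧ InTreeRootedAt p.2 i i)) ∧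
            reach p.2 p.1 i)
        = univ.filter (fun p : Fin n × Finset (Fin n × Fin n) =>
            0 < W i p.1 ∧ (IsInForest W p.2 ∧ p.2.card = k ∧ InTreeRootedAt p.2 p.1 i)) :=
      Finset.filter_congr fun p _ => by
        rw [inTree_self_iff, inTree_iff (A := p.2) (a := p.1)]; tauto
    have hnreach : univ.filter (fun p : Fin n × Finset (Fin n × Fin n) =>
          (0 < W i p.1 ∧ (IsInForest W p.2 ∧ p.2.card = k ∧ InTreeRootedAt p.2 i i)) ∧
            ¬ reach p.2 p.1 i)
        = univ.filter (fun p : Fin n × Finset (Fin n × Fin n) =>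
            0 < W i p.1 ∧ (IsInForest W p.2 ∧ p.2.card = k) ∧ noOut p.2 i ∧
              ¬ reach p.2 p.1 i) :=
      Finset.filter_congr fun p _ => by rw [inTree_self_iff]; tauto
    rw [hreach, hnreach] at hsplitp
    have hb1 := bij_one (W := W) hW hdiag k i
    linarith
  · rw [if_neg hij, mul_zero, zero_add]
    have hsplitp := Finset.sum_filter_add_sum_filter_not
      (univ.filter (fun p : Fin n × Finset (Fin n × Fin n) =>
        0 < W i p.1 ∧ (IsInForest W p.2 ∧ p.2.card = k ∧ InTreeRootedAt p.2 p.1 j)))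
      (fun p => noOut p.2 i) (fun p => W i p.1 * forestWeight W p.2)
    rw [Finset.filter_filter, Finset.filter_filter] at hsplitp
    have h1 : univ.filter (fun p : Fin n × Finset (Fin n × Fin n) =>
          (0 < W i p.1 ∧ (IsInForest W p.2 ∧ p.2.card = k ∧ InTreeRootedAt p.2 p.1 j)) ∧
            noOut p.2 i)
        = univ.filter (fun p : Fin n × Finset (Fin n × Fin n) =>
            0 < W i p.1 ∧ ((IsInForest W p.2 ∧ p.2.card = k) ∧ InTreeRootedAt p.2 p.1 j) ∧
              noOut p.2 i) :=
      Finset.filter_congr fun p _ => by tauto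
    have h2 : univ.filter (fun p : Fin n × Finset (Fin n × Fin n) =>
          (0 < W i p.1 ∧ (IsInForest W p.2 ∧ p.2.card = k ∧ InTreeRootedAt p.2 p.1 j)) ∧
            ¬ noOut p.2 i)
        = univ.filter (fun p : Fin n × Finset (Fin n × Fin n) =>
            0 < W i p.1 ∧ ((IsInForest W p.2 ∧ p.2.card = k) ∧ InTreeRootedAt p.2 p.1 j) ∧
              ¬ noOut p.2 i) :=
      Finset.filter_congr fun p _ => by tauto
    rw [h1, h2] at hsplitp
    have hb2 := bij_two (W := W) hW hdiag k i j hij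
    have hb3 := bij_three (W := W) hW hdiag k i j hij
    linarith

end GroupInvAux
namespace GroupInvAux

open Finset Matrix
variable {n : ℕ} {W : Matrix (Fin n) (Fin n) ℝ}

theorem forest_empty : IsInForest W (∅ : Finset (Fin n × Fin n)) := by
  refine ⟨fun e he => absurd he (Finset.notMem_empty e), fun i => by simp, fun i h => ?_⟩
  rcases Relation.TransGen.head'_iff.mp h with ⟨b, hb, -⟩
  exact Finset.notMem_empty _ hb

theorem reach_empty {a b : Fin n} (h : reach (∅ : Finset (Fin n × Fin n)) a b) : a = b := by
  rcases Relation.ReflTransGen.cases_head h with h | ⟨c, hc, -⟩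
  exacts [h, absurd hc (Finset.notMem_empty _)]

theorem forestWeight_empty : forestWeight W (∅ : Finset (Fin n × Fin n)) = 1 :=
  Finset.prod_empty

open scoped Classical in
theorem Q_zero : forestMatrix W 0 = 1 := by
  ext i j
  simp only [forestMatrix, Matrix.of_apply, Finset.powerset_univ]
  have hiff : ∀ A : Finset (Fin n × Fin n),
      (IsInForest W A ∧ A.card = 0 ∧ InTreeRootedAt A i j) ↔ (A = ∅ ∧ i = j) := by
    intro A
    constructor
    · rintro ⟨hF, hc, hr, hn⟩
      have hA : A = ∅ := Finset.card_eq_zero.mp hc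
      subst hA
      exact ⟨rfl, reach_empty hr⟩
    · rintro ⟨rfl, rfl⟩
      exact ⟨forest_empty, rfl, Relation.ReflTransGen.refl,
        fun e he => absurd he (Finset.notMem_empty e)⟩
  rw [Finset.filter_congr fun A _ => hiff A]
  by_cases hij : i = j
  · subst hij
    rw [Matrix.one_apply_eq]
    have h2 : (univ.filter (fun A : Finset (Fin n × Fin n) => A = ∅ ∧ i = i)) = {∅} := by
      ext A; simp
    rw [h2, Finset.sum_singleton, forestWeight_empty]
  · rw [Matrix.one_apply_ne hij]
    have h2 : (univ.filter (fun A : Finset (Fin n × Fin n) => A = ∅ ∧ i = j)) = ∅ := by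
      ext A; simp [hij]
    rw [h2, Finset.sum_empty]

open scoped Classical in
theorem sigma_zero : sigmaW W 0 = 1 := by
  rw [sigmaW, Finset.powerset_univ]
  have hiff : ∀ A : Finset (Fin n × Fin n),
      (IsInForest W A ∧ A.card = 0) ↔ A = ∅ := by
    intro A
    constructor
    · rintro ⟨-, hc⟩; exact Finset.card_eq_zero.mp hc
    · rintro rfl; exact ⟨forest_empty, rfl⟩
  rw [Finset.filter_congr fun A _ => hiff A]
  have h2 : (univ.filter (fun A : Finset (Fin n × Fin n) => A = ∅)) = {∅} := by
    ext A; simp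
  rw [h2, Finset.sum_singleton, forestWeight_empty]

open scoped Classical in
theorem card_le_max {A : Finset (Fin n × Fin n)} (hF : IsInForest W A) :
    A.card ≤ maxForestCard W :=
  Finset.le_sup (f := Finset.card)
    (Finset.mem_filter.mpr ⟨Finset.mem_powerset.mpr (Finset.subset_univ A), hF⟩)

open scoped Classical in
theorem sigma_top : sigmaW W (maxForestCard W + 1) = 0 := by
  rw [sigmaW]
  have h : (Finset.univ.powerset.filter
      (fun A : Finset (Fin n × Fin n) => IsInForest W A ∧ A.card = maxForestCard W + 1)) = ∅ := by
    rw [Finset.filter_eq_empty_iff]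
    rintro A - ⟨hF, hc⟩
    have := card_le_max hF
    omega
  rw [h, Finset.sum_empty]

open scoped Classical in
theorem Q_top : forestMatrix W (maxForestCard W + 1) = 0 := by
  ext i j
  rw [forestMatrix]
  have h : (Finset.univ.powerset.filter
      (fun A : Finset (Fin n × Fin n) =>
        IsInForest W A ∧ A.card = maxForestCard W + 1 ∧ InTreeRootedAt A i j)) = ∅ := by
    rw [Finset.filter_eq_empty_iff]
    rintro A - ⟨hF, hc, -⟩
    have := card_le_max hF
    omega
  rw [Matrix.of_apply, h, Finset.sum_empty, Matrix.zero_apply]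

open scoped Classical in
theorem sigma_max_pos : 0 < sigmaW W (maxForestCard W) := by
  obtain ⟨A, hA, hsup⟩ := Finset.exists_mem_eq_sup
    (Finset.univ.powerset.filter fun A : Finset (Fin n × Fin n) => IsInForest W A)
    ⟨∅, Finset.mem_filter.mpr ⟨Finset.mem_powerset.mpr (Finset.empty_subset _), forest_empty⟩⟩
    Finset.card
  rw [sigmaW]
  apply Finset.sum_pos
  · intro B hB
    obtain ⟨-, hF, -⟩ := Finset.mem_filter.mp hB
    exact Finset.prod_pos fun e he => forest_pos hF he
  · refine ⟨A, Finset.mem_filter.mpr ⟨Finset.mem_powerset.mpr (Finset.subset_univ _),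
      (Finset.mem_filter.mp hA).2, ?_⟩⟩
    rw [maxForestCard, hsup]

open scoped Classical in
theorem key (hW : ∀ a b, 0 ≤ W a b) (hdiag : ∀ a, W a a = 0) (k : ℕ) :
    forestMatrix W (k + 1)
      = sigmaW W (k + 1) • (1 : Matrix (Fin n) (Fin n) ℝ) - lap W * forestMatrix W k := by
  ext i j
  have h := key_entry hW hdiag k i j
  have hlap : (lap W * forestMatrix W k) i j
      = (∑ t, W i t) * forestMatrix W k i j - ∑ l, W i l * forestMatrix W k l j := by
    rw [lap, Matrix.sub_mul, Matrix.sub_apply, Matrix.diagonal_mul, Matrix.mul_apply]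
  simp only [Matrix.sub_apply, Matrix.smul_apply, Matrix.one_apply, smul_eq_mul]
  rw [hlap, Finset.sum_mul]
  linarith

theorem comm_lap (hW : ∀ a b, 0 ≤ W a b) (hdiag : ∀ a, W a a = 0) (k : ℕ) :
    lap W * forestMatrix W k = forestMatrix W k * lap W := by
  induction k with
  | zero => rw [Q_zero, mul_one, one_mul]
  | succ k ih =>
    rw [key hW hdiag k, Matrix.mul_sub, Matrix.sub_mul, mul_smul_comm, smul_mul_assoc,
      mul_one, one_mul]
    congr 1
    rw [mul_assoc, ← ih, ← mul_assoc]

theorem LQ_max (hW : ∀ a b, 0 ≤ W a b) (hdiag : ∀ a, W a a = 0) :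
    lap W * forestMatrix W (maxForestCard W) = 0 := by
  have h := key (W := W) hW hdiag (maxForestCard W)
  rw [Q_top, sigma_top, zero_smul, zero_sub] at h
  exact neg_eq_zero.mp h.symm

theorem QL_max (hW : ∀ a b, 0 ≤ W a b) (hdiag : ∀ a, W a a = 0) :
    forestMatrix W (maxForestCard W) * lap W = 0 := by
  rw [← comm_lap hW hdiag, LQ_max hW hdiag]

theorem QQ_max (hW : ∀ a b, 0 ≤ W a b) (hdiag : ∀ a, W a a = 0) (k : ℕ) :
    forestMatrix W k * forestMatrix W (maxForestCard W)
      = sigmaW W k • forestMatrix W (maxForestCard W) := by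
  induction k with
  | zero => rw [Q_zero, one_mul, sigma_zero, one_smul]
  | succ k ih =>
    rw [key hW hdiag k, Matrix.sub_mul, smul_mul_assoc, one_mul, mul_assoc, ih,
      mul_smul_comm, LQ_max hW hdiag, smul_zero, sub_zero]

theorem LJ (hW : ∀ a b, 0 ≤ W a b) (hdiag : ∀ a, W a a = 0) :
    lap W * Jtilde W = 0 := by
  rw [Jtilde, mul_smul_comm, LQ_max hW hdiag, smul_zero]

theorem JL (hW : ∀ a b, 0 ≤ W a b) (hdiag : ∀ a, W a a = 0) :
    Jtilde W * lap W = 0 := by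
  rw [Jtilde, smul_mul_assoc, QL_max hW hdiag, smul_zero]

theorem JJ (hW : ∀ a b, 0 ≤ W a b) (hdiag : ∀ a, W a a = 0) :
    Jtilde W * Jtilde W = Jtilde W := by
  have hσ : sigmaW W (maxForestCard W) ≠ 0 := ne_of_gt sigma_max_pos
  rw [Jtilde, smul_mul_assoc, mul_smul_comm, QQ_max hW hdiag, smul_smul, smul_smul]
  congr 1
  field_simp

theorem M_unit (hW : ∀ a b, 0 ≤ W a b) (hdiag : ∀ a, W a a = 0) :
    IsUnit (lap W + Jtilde W).det := by
  rw [isUnit_iff_ne_zero]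
  intro hdet
  obtain ⟨v, hv, hMv⟩ := Matrix.exists_mulVec_eq_zero_iff.mpr hdet
  have hσ : sigmaW W (maxForestCard W) ≠ 0 := ne_of_gt sigma_max_pos
  have h1 : Jtilde W * (lap W + Jtilde W) = Jtilde W := by
    rw [Matrix.mul_add, JL hW hdiag, zero_add, JJ hW hdiag]
  have hJv : (Jtilde W).mulVec v = 0 := by
    have h2 : (Jtilde W).mulVec ((lap W + Jtilde W).mulVec v) = (Jtilde W).mulVec v := by
      rw [Matrix.mulVec_mulVec, h1]
    rw [hMv, Matrix.mulVec_zero] at h2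
    exact h2.symm
  have hLv : (lap W).mulVec v = 0 := by
    have h2 := hMv
    rw [Matrix.add_mulVec, hJv, add_zero] at h2
    exact h2
  have hQv : (forestMatrix W (maxForestCard W)).mulVec v
      = sigmaW W (maxForestCard W) • v := by
    cases hmc : maxForestCard W with
    | zero => rw [Q_zero, Matrix.one_mulVec, sigma_zero, one_smul]
    | succ m =>
      rw [key hW hdiag m, comm_lap hW hdiag, Matrix.sub_mulVec,
        Matrix.smul_mulVec, Matrix.one_mulVec, ← Matrix.mulVec_mulVec, hLv,
        Matrix.mulVec_zero, sub_zero]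
  have hJv2 : (Jtilde W).mulVec v = v := by
    rw [Jtilde, Matrix.smul_mulVec, hQv, smul_smul, inv_mul_cancel₀ hσ, one_smul]
  rw [hJv] at hJv2
  exact hv hJv2.symm

end GroupInvAux
/-- The group inverse `L^#` of the Laplacian exists and satisfies, for every
`α ≠ 0`, `L^# = (L + αJ̃)⁻¹ − α⁻¹ J̃ = (L + αJ̃)⁻¹ (I − J̃)`, and `J̃ = I − L L^#`. -/
theorem groupInverse_lap_representation {n : ℕ} (W : Matrix (Fin n) (Fin n) ℝ)
    (hn : 1 < n) (hW : ∀ i j, 0 ≤ W i j) (hdiag : ∀ i, W i i = 0) :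
    ∃ X : Matrix (Fin n) (Fin n) ℝ,
      lap W * X * lap W = lap W ∧ X * lap W * X = X ∧ lap W * X = X * lap W ∧
      (∀ α : ℝ, α ≠ 0 →
        X = (lap W + α • Jtilde W)⁻¹ - α⁻¹ • Jtilde W ∧
        X = (lap W + α • Jtilde W)⁻¹ * (1 - Jtilde W)) ∧
      Jtilde W = 1 - lap W * X := by
  classical
  obtain ⟨L, J⟩ : True ∧ True := ⟨trivial, trivial⟩
  set L := lap W with hLdef
  set J := Jtilde W with hJdef
  have hLJ : L * J = 0 := GroupInvAux.LJ hW hdiag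
  have hJL : J * L = 0 := GroupInvAux.JL hW hdiag
  have hJJ : J * J = J := GroupInvAux.JJ hW hdiag
  have hdet : IsUnit (L + J).det := GroupInvAux.M_unit hW hdiag
  have hMM : (L + J) * (L + J)⁻¹ = 1 := Matrix.mul_nonsing_inv _ hdet
  have hMM' : (L + J)⁻¹ * (L + J) = 1 := Matrix.nonsing_inv_mul _ hdet
  set N := (L + J)⁻¹ with hNdef
  have hMJ : (L + J) * J = J := by rw [Matrix.add_mul, hLJ, zero_add, hJJ]
  have hJM : J * (L + J) = J := by rw [Matrix.mul_add, hJL, zero_add, hJJ]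
  have hNJ : N * J = J := by
    have h : N * ((L + J) * J) = N * J := by rw [hMJ]
    rw [← mul_assoc, hMM', one_mul] at h
    exact h.symm
  have hJN : J * N = J := by
    have h : (J * (L + J)) * N = J * N := by rw [hJM]
    rw [mul_assoc, hMM, mul_one] at h
    exact h.symm
  set X := N - J with hXdef
  have hLN : L * N = 1 - J := by
    have h : (L + J) * N - J * N = 1 - J := by rw [hMM, hJN]
    rwa [← Matrix.sub_mul, add_sub_cancel_right] at h
  have hNL : N * L = 1 - J := by
    have h : N * (L + J) - N * J = 1 - J := by rw [hMM', hNJ]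
    rwa [← Matrix.mul_sub, add_sub_cancel_right] at h
  have hLX : L * X = 1 - J := by rw [hXdef, Matrix.mul_sub, hLJ, sub_zero, hLN]
  have hXL : X * L = 1 - J := by rw [hXdef, Matrix.sub_mul, hJL, sub_zero, hNL]
  have hXJ : X * J = 0 := by rw [hXdef, Matrix.sub_mul, hNJ, hJJ, sub_self]
  have hJX : J * X = 0 := by rw [hXdef, Matrix.mul_sub, hJN, hJJ, sub_self]
  refine ⟨X, ?_, ?_, ?_, ?_, ?_⟩
  · rw [hLX, Matrix.sub_mul, one_mul, hJL, sub_zero]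
  · rw [hXL, Matrix.sub_mul, one_mul, hJX, sub_zero]
  · rw [hLX, hXL]
  · intro α hα
    have hinv : (L + α • J)⁻¹ = X + α⁻¹ • J := by
      apply Matrix.inv_eq_right_inv
      rw [Matrix.add_mul, Matrix.mul_add, Matrix.mul_add, hLX, mul_smul_comm, hLJ,
        smul_zero, add_zero, smul_mul_assoc, hJX, smul_zero, zero_add, smul_mul_assoc,
        mul_smul_comm, hJJ, smul_smul, mul_inv_cancel₀ hα, one_smul, sub_add_cancel]
    refine ⟨?_, ?_⟩
    · rw [hinv, add_sub_cancel_right]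
    · rw [hinv, Matrix.add_mul, Matrix.mul_sub, mul_one, hXJ, sub_zero, smul_mul_assoc,
        Matrix.mul_sub, mul_one, hJJ, sub_self, smul_zero, add_zero]
  · rw [hLX, sub_sub_cancel]
end
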